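/- arXiv:math/0606689 — 10 statements merged into one kernel-verified Lean document; each statement's English description precedes it below -/
import Mathlib

section
/- Let C ⊆ D be a ring extension of commutative rings satisfying Lying-Over and Going-Down. If the minimal prime ideals of D are pairwise comaximal, then the minimal prime ideals of C are pairwise comaximal. -/
open Polynomial TensorProduct

/-- A ring satisfies MPC if its minimal primes are pairwise comaximal. -/
def MPC (A : Type*) [CommRing A] : Prop :=
  ∀ p ∈ minimalPrimes A, ∀ q ∈ minimalPrimes A, p ≠ q → p ⊔ q = ⊤

/-- A domain is an S-domain if every height-one prime `p` satisfies `ht (p[X]) = 1`. -/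
def IsSDomain (D : Type*) [CommRing D] [IsDomain D] : Prop :=
  ∀ p : PrimeSpectrum D, Order.height p = 1 →
    ∀ P : PrimeSpectrum D[X], P.asIdeal = p.asIdeal.map (C : D →+* D[X]) →
      Order.height P = 1

/-- A ring is a strong S-ring if the quotient by every prime is an S-domain. -/
def StrongSRing (A : Type*) [CommRing A] : Prop :=
  ∀ p : PrimeSpectrum A, IsSDomain (A ⧸ p.asIdeal)

/-- A ring is a stably strong S-ring if all polynomial rings over it in `n ≥ 1`
variables are strong S-rings. -/
def StablyStrongSRing (A : Type*) [CommRing A] : Prop :=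
  ∀ n : ℕ, 0 < n → StrongSRing (MvPolynomial (Fin n) A)

/-- A ring is locally finite dimensional (LFD) if every prime has finite height. -/
def LFD (A : Type*) [CommRing A] : Prop :=
  ∀ p : PrimeSpectrum A, Order.height p ≠ ⊤

/-- A ring is catenarian if it satisfies MPC, is LFD, and adjacent primes `P ⋖ Q`
satisfy `ht Q = ht P + 1`. -/
def Catenarian (A : Type*) [CommRing A] : Prop :=
  MPC A ∧ LFD A ∧
    ∀ P Q : PrimeSpectrum A, P ⋖ Q → Order.height Q = Order.height P + 1

/-- A ring is universally catenarian if all polynomial rings over it in `n ≥ 1`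
variables are catenarian. -/
def UniversallyCatenarian (A : Type*) [CommRing A] : Prop :=
  ∀ n : ℕ, 0 < n → Catenarian (MvPolynomial (Fin n) A)

/-- An S-ring: MPC together with the quotient by each minimal prime being an S-domain. -/
def SRing (A : Type*) [CommRing A] : Prop :=
  MPC A ∧ ∀ p : PrimeSpectrum A, p.asIdeal ∈ minimalPrimes A → IsSDomain (A ⧸ p.asIdeal)

/-- The transcendence degree of a `k`-algebra `A`: the supremum of the cardinalities
of algebraically independent subsets of `A` over `k`. -/
noncomputable def trdeg (k A : Type*) [CommRing k] [CommRing A] [Algebra k A] : Cardinal :=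
  ⨆ s : {s : Set A // AlgebraicIndependent k ((↑) : s → A)}, Cardinal.mk s.1

/-- If `C ⊆ D` is a ring extension satisfying Lying-Over and
Going-Down and `D` satisfies MPC, then `C` satisfies MPC. -/
theorem stmt0 {C D : Type*} [CommRing C] [CommRing D] (f : C →+* D)
    (hinj : Function.Injective f)
    (hLO : ∀ p : Ideal C, p.IsPrime → ∃ P : Ideal D, P.IsPrime ∧ P.comap f = p)
    (hGD : ∀ p q : Ideal C, p.IsPrime → q.IsPrime → p ≤ q →
      ∀ Q : Ideal D, Q.IsPrime → Q.comap f = q →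
        ∃ P : Ideal D, P.IsPrime ∧ P ≤ Q ∧ P.comap f = p)
    (hD : MPC D) : MPC C := by
  intro p hp q hq hpq
  by_contra hne
  obtain ⟨m, hm, hle⟩ := Ideal.exists_le_maximal _ hne
  have hmp : m.IsPrime := hm.isPrime
  obtain ⟨M, hM, hMc⟩ := hLO m hmp
  obtain ⟨P, hP, hPM, hPc⟩ := hGD p m hp.1.1 hmp (le_trans le_sup_left hle) M hM hMc
  obtain ⟨Q, hQ, hQM, hQc⟩ := hGD q m hq.1.1 hmp (le_trans le_sup_right hle) M hM hMc
  obtain ⟨P₀, hP₀, hP₀P⟩ := Ideal.exists_minimalPrimes_le (bot_le : ⊥ ≤ P)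
  obtain ⟨Q₀, hQ₀, hQ₀Q⟩ := Ideal.exists_minimalPrimes_le (bot_le : ⊥ ≤ Q)
  by_cases h : P₀ = Q₀
  · apply hpq
    have h1 : P₀.comap f ≤ p := hPc ▸ Ideal.comap_mono hP₀P
    have h2 : P₀.comap f ≤ q := by
      rw [h]; exact hQc ▸ Ideal.comap_mono hQ₀Q
    have hprime : (P₀.comap f).IsPrime := by have := hP₀.1.1; exact Ideal.IsPrime.comap f
    have e1 : p = P₀.comap f := le_antisymm (hp.2 ⟨hprime, bot_le⟩ h1) h1
    have e2 : q = P₀.comap f := le_antisymm (hq.2 ⟨hprime, bot_le⟩ h2) h2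
    rw [e1, e2]
  · have := hD P₀ hP₀ Q₀ hQ₀ h
    have hMtop : (⊤ : Ideal D) ≤ M := this ▸ sup_le (hP₀P.trans hPM) (hQ₀Q.trans hQM)
    exact hM.ne_top (top_le_iff.mp hMtop)
end

section
/- If A is a commutative ring satisfying MPC and S is a multiplicative subset of A, then the localization S⁻¹A satisfies MPC. -/
open Polynomial TensorProduct

/-- MPC passes to localizations. -/
theorem stmt1 {A : Type*} [CommRing A] (hA : MPC A) (S : Submonoid A) :
    MPC (Localization S) := by
  set L := Localization S
  set f := algebraMap A L
  -- comap of a minimal prime is a minimal prime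
  have key : ∀ p ∈ minimalPrimes L, p.comap f ∈ minimalPrimes A := by
    intro p hp
    have hpP : p.IsPrime := hp.1.1
    have hdisj : (p.comap f).IsPrime ∧ Disjoint (S : Set A) (p.comap f : Set A) :=
      (IsLocalization.isPrime_iff_isPrime_disjoint S L p).mp hpP
    refine ⟨⟨hdisj.1, bot_le⟩, ?_⟩
    rintro q ⟨hqP, -⟩ hle
    have hqd : Disjoint (S : Set A) (q : Set A) :=
      Set.disjoint_of_subset_right hle hdisj.2
    have hmapP : (q.map f).IsPrime :=
      IsLocalization.isPrime_of_isPrime_disjoint S L q hqP hqd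
    have hmaple : q.map f ≤ p := by
      have := Ideal.map_mono (f := f) hle
      rwa [IsLocalization.map_comap S L p] at this
    have : p ≤ q.map f := hp.2 ⟨hmapP, bot_le⟩ hmaple
    calc p.comap f ≤ (q.map f).comap f := Ideal.comap_mono this
      _ = q := IsLocalization.comap_map_of_isPrime_disjoint S L hqP hqd
  intro p hp q hq hne
  have hne' : p.comap f ≠ q.comap f := fun h => hne <| by
    rw [← IsLocalization.map_comap S L p, ← IsLocalization.map_comap S L q]; exact congrArg (Ideal.map (algebraMap A L)) h
  have := hA _ (key p hp) _ (key q hq) hne'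
  have htop : Ideal.map f (p.comap f ⊔ q.comap f) = ⊤ := by
    rw [this, Ideal.map_top]
  rw [Ideal.map_sup, IsLocalization.map_comap S L p, IsLocalization.map_comap S L q] at htop
  exact htop
end

section
/- If A is a commutative ring satisfying MPC, then the polynomial ring A[X₁,...,Xₙ] satisfies MPC for every positive integer n. -/
open Polynomial TensorProduct

lemma isPrime_map_C' {A : Type*} [CommRing A] {σ : Type*} (p : Ideal A) [p.IsPrime] :
    (p.map (MvPolynomial.C : A →+* MvPolynomial σ A)).IsPrime := by
  have : p.map (MvPolynomial.C : A →+* MvPolynomial σ A)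
      = RingHom.ker (MvPolynomial.map (Ideal.Quotient.mk p)) := by
    rw [MvPolynomial.ker_map, Ideal.mk_ker]
  rw [this]
  exact RingHom.ker_isPrime _

lemma minimal_prime_poly {A : Type*} [CommRing A] {σ : Type*}
    {P : Ideal (MvPolynomial σ A)} (hP : P ∈ minimalPrimes (MvPolynomial σ A)) :
    ∃ p ∈ minimalPrimes A, P = p.map (MvPolynomial.C : A →+* MvPolynomial σ A) := by
  have hPp : P.IsPrime := hP.1.1
  have hcp : (P.comap (MvPolynomial.C : A →+* MvPolynomial σ A)).IsPrime :=
    Ideal.comap_isPrime _ _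
  obtain ⟨p₀, hp₀, hle⟩ := Ideal.exists_minimalPrimes_le
    (bot_le : (⊥ : Ideal A) ≤ P.comap MvPolynomial.C)
  have hmaple : p₀.map (MvPolynomial.C : A →+* MvPolynomial σ A) ≤ P :=
    Ideal.map_le_iff_le_comap.mpr hle
  have hp₀p : p₀.IsPrime := hp₀.1.1
  have hprime := isPrime_map_C' (σ := σ) p₀
  exact ⟨p₀, hp₀, le_antisymm (hP.2 ⟨hprime, bot_le⟩ hmaple) hmaple⟩

/-- MPC passes to polynomial rings in `n ≥ 1` variables. -/
theorem stmt2 {A : Type*} [CommRing A] (hA : MPC A) (n : ℕ) (hn : 0 < n) :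
    MPC (MvPolynomial (Fin n) A) := by
  intro P hP Q hQ hne
  obtain ⟨p, hp, rfl⟩ := minimal_prime_poly hP
  obtain ⟨q, hq, rfl⟩ := minimal_prime_poly hQ
  have hpq : p ≠ q := fun h => hne (by rw [h])
  have := hA p hp q hq hpq
  rw [← Ideal.map_sup, this, Ideal.map_top]
end

section
/- Let A ⊆ T be an integral extension of commutative rings. If T is a strong S-ring, then A is a strong S-ring. -/
open Polynomial TensorProduct

section Aux

open Polynomial

/-- Height-one characterization in the prime spectrum of a domain. -/
lemma heightOneIff {R : Type*} [CommRing R] [IsDomain R] {p : PrimeSpectrum R} :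
    Order.height p = 1 ↔ p.asIdeal ≠ ⊥ ∧ ∀ q : PrimeSpectrum R, q < p → q.asIdeal = ⊥ := by
  have hbot : ∀ q : PrimeSpectrum R, (⟨⊥, Ideal.bot_prime⟩ : PrimeSpectrum R) ≤ q :=
    fun q => (PrimeSpectrum.asIdeal_le_asIdeal _ _).mp bot_le
  have hcast : (1 : ℕ∞) = ((1 : ℕ) : ℕ∞) := rfl
  constructor
  · intro h
    have hle := h.le
    rw [hcast, Order.height_le_coe_iff] at hle
    refine ⟨fun hb => ?_, fun q hq => ?_⟩
    · have hmin : IsMin p := by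
        intro b hb'
        exact (PrimeSpectrum.asIdeal_le_asIdeal _ _).mp (hb ▸ bot_le)
      rw [Order.height_eq_zero.mpr hmin] at h
      exact zero_ne_one h
    · have h0 : Order.height q = 0 := ENat.lt_one_iff_eq_zero.mp (hle q hq)
      have hmin := Order.height_eq_zero.mp h0
      have := hmin (hbot q)
      exact le_antisymm this bot_le
  · rintro ⟨h1, h2⟩
    apply le_antisymm
    · rw [hcast, Order.height_le_coe_iff]
      intro y hy
      have hy0 := h2 y hy
      have hmin : IsMin y := fun b hb =>
        (PrimeSpectrum.asIdeal_le_asIdeal _ _).mp (hy0 ▸ bot_le)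
      rw [Order.height_eq_zero.mpr hmin]
      exact_mod_cast zero_lt_one
    · rw [ENat.one_le_iff_ne_zero]
      intro h0
      exact h1 (le_antisymm (Order.height_eq_zero.mp h0 (hbot p)) bot_le)

/-- Incomparability for integral extensions. -/
lemma comapLtOfLt {R S : Type*} [CommRing R] [CommRing S] [Algebra R S]
    [Algebra.IsIntegral R S] {I J : Ideal S} [I.IsPrime] (h : I < J) :
    I.comap (algebraMap R S) < J.comap (algebraMap R S) := by
  obtain ⟨hle, x, hxJ, hxI⟩ := SetLike.lt_iff_le_and_exists.mp h
  exact Ideal.comap_lt_comap_of_integral_mem_sdiff hle ⟨hxJ, hxI⟩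
    (Algebra.IsIntegral.isIntegral x)

lemma comap_C_map_C {D : Type*} [CommRing D] (p : Ideal D) :
    (p.map (C : D →+* D[X])).comap (C : D →+* D[X]) = p := by
  ext a
  simp only [Ideal.mem_comap, Ideal.mem_map_C_iff, coeff_C]
  constructor
  · intro h; simpa using h 0
  · intro h n
    split <;> simp [h]

lemma comap_mapRingHom_map_C {D E : Type*} [CommRing D] [CommRing E] (g : D →+* E) (q : Ideal E) :
    (q.map (C : E →+* E[X])).comap (mapRingHom g) = (q.comap g).map (C : D →+* D[X]) := by
  ext f
  simp [Ideal.mem_comap, Ideal.mem_map_C_iff, coe_mapRingHom, coeff_map]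

lemma mapRingHom_isIntegral {D E : Type*} [CommRing D] [CommRing E] {g : D →+* E}
    (h : g.IsIntegral) : (mapRingHom g).IsIntegral := by
  letI : Algebra D[X] E[X] := (mapRingHom g).toAlgebra
  intro f
  show IsIntegral D[X] f
  induction f using Polynomial.induction_on' with
  | add p q hp hq => exact hp.add hq
  | monomial n e =>
    rw [← C_mul_X_pow_eq_monomial]
    apply IsIntegral.mul
    · obtain ⟨P, hm, he⟩ := h e
      refine ⟨P.map (C : D →+* D[X]), hm.map _, ?_⟩
      have halg : (algebraMap D[X] E[X]) = mapRingHom g := rfl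
      rw [halg, eval₂_map]
      have hcomp : (mapRingHom g).comp (C : D →+* D[X]) = (C : E →+* E[X]).comp g := by
        ext a <;> simp
      rw [hcomp, ← hom_eval₂, he, map_zero]
    · have : (algebraMap D[X] E[X]) ((X : D[X]) ^ n) = (X : E[X]) ^ n := by
        show mapRingHom g ((X : D[X]) ^ n) = _
        simp
      exact this ▸ isIntegral_algebraMap

lemma quotientMap_isIntegral {R S : Type*} [CommRing R] [CommRing S] {f : R →+* S}
    (hf : f.IsIntegral) {I : Ideal R} {J : Ideal S} (H : I ≤ J.comap f) :
    (Ideal.quotientMap J f H).IsIntegral := by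
  rintro ⟨x⟩
  obtain ⟨p, p_monic, hpx⟩ := hf x
  refine ⟨p.map (Ideal.Quotient.mk I), p_monic.map _, ?_⟩
  show eval₂ _ (Ideal.Quotient.mk J x) _ = 0
  simpa only [hom_eval₂, eval₂_map, Ideal.quotientMap_comp_mk, map_zero] using congr_arg (Ideal.Quotient.mk J) hpx

/-- Key lemma: S-domain descends along injective integral maps of domains
when the top is a strong S-ring; actually only S-domain of the top is needed. -/
lemma key {D E : Type*} [CommRing D] [CommRing E] [IsDomain D] [IsDomain E]
    (g : D →+* E) (hinj : Function.Injective g) (hint : g.IsIntegral)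
    (hE : IsSDomain E) : IsSDomain D := by
  letI : Algebra D E := g.toAlgebra
  haveI : Algebra.IsIntegral D E := ⟨hint⟩
  have halg : algebraMap D E = g := rfl
  letI : Algebra D[X] E[X] := (mapRingHom g).toAlgebra
  haveI : Algebra.IsIntegral D[X] E[X] := ⟨mapRingHom_isIntegral hint⟩
  have halgX : algebraMap D[X] E[X] = mapRingHom g := rfl
  have hinjX : Function.Injective (mapRingHom g) := fun a b hab => map_injective g hinj hab
  intro p hp P' hP'
  rw [heightOneIff] at hp
  rw [heightOneIff, hP']
  obtain ⟨hp1, hp2⟩ := hp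
  constructor
  · -- p.map C ≠ ⊥
    obtain ⟨a, ha, ha0⟩ := Submodule.exists_mem_ne_zero_of_ne_bot hp1
    intro hb
    have : (C a : D[X]) ∈ p.asIdeal.map (C : D →+* D[X]) := Ideal.mem_map_of_mem _ ha
    rw [hb, Ideal.mem_bot] at this
    exact ha0 (by simpa using this)
  · intro y hy
    by_contra hy0
    haveI := y.2
    haveI hPCprime : (p.asIdeal.map (C : D →+* D[X])).IsPrime :=
      by haveI := p.2; exact Ideal.isPrime_map_C_of_isPrime
    have hylt : y.asIdeal < p.asIdeal.map (C : D →+* D[X]) :=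
      hP' ▸ (PrimeSpectrum.asIdeal_lt_asIdeal _ _).mpr hy
    -- lying over y
    obtain ⟨Q₁, hQ₁ge, hQ₁prime, hQ₁c⟩ :=
      Ideal.exists_ideal_over_prime_of_isIntegral y.asIdeal (⊥ : Ideal E[X])
        (by rw [halgX, Ideal.comap_bot_of_injective _ hinjX]; exact bot_le)
    haveI := hQ₁prime
    -- going up to P'
    obtain ⟨Q₂, hQ₁₂, hQ₂prime, hQ₂c⟩ :=
      Ideal.exists_ideal_over_prime_of_isIntegral (p.asIdeal.map (C : D →+* D[X])) Q₁
        (by rw [hQ₁c]; exact hylt.le)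
    haveI := hQ₂prime
    rw [halgX] at hQ₁c hQ₂c
    set q : Ideal E := Q₂.comap (C : E →+* E[X]) with hq
    haveI : q.IsPrime := Ideal.IsPrime.comap _
    have hqD : q.comap g = p.asIdeal := by
      rw [hq, Ideal.comap_comap]
      have hcomp : (C : E →+* E[X]).comp g = (mapRingHom g).comp (C : D →+* D[X]) := by
        ext a <;> simp
      rw [hcomp, ← Ideal.comap_comap, hQ₂c, comap_C_map_C]
    -- q has height 1
    have hqht : Order.height (⟨q, inferInstance⟩ : PrimeSpectrum E) = 1 := by
      rw [heightOneIff]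
      constructor
      · intro hb
        have hb' : q = ⊥ := hb
        rw [hb', Ideal.comap_bot_of_injective g hinj] at hqD
        exact hp1 hqD.symm
      · intro y' hy'
        haveI := y'.2
        have hlt : y'.asIdeal.comap (algebraMap D E) < q.comap (algebraMap D E) :=
          comapLtOfLt ((PrimeSpectrum.asIdeal_lt_asIdeal _ _).mpr hy')
        -- contraction of y' is a prime < p, hence ⊥
        rw [halg, hqD] at hlt
        have hyb : y'.asIdeal.comap (algebraMap D E) = ⊥ :=
          hp2 ⟨y'.asIdeal.comap g, Ideal.IsPrime.comap _⟩
            ((PrimeSpectrum.asIdeal_lt_asIdeal _ _).mp hlt)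
        exact Ideal.eq_bot_of_comap_eq_bot hyb
    -- apply S-domain property of E
    have hqXht := hE ⟨q, inferInstance⟩ hqht
      ⟨q.map (C : E →+* E[X]), Ideal.isPrime_map_C_of_isPrime⟩ rfl
    rw [heightOneIff] at hqXht
    -- Q₂ = q.map C by incomparability
    have hsub : q.map (C : E →+* E[X]) ≤ Q₂ := Ideal.map_le_iff_le_comap.mpr le_rfl
    have hQ₂eq : q.map (C : E →+* E[X]) = Q₂ := by
      by_contra hne
      have hlt2 : q.map (C : E →+* E[X]) < Q₂ := lt_of_le_of_ne hsub hne
      haveI : (q.map (C : E →+* E[X])).IsPrime := Ideal.isPrime_map_C_of_isPrime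
      have := comapLtOfLt (R := D[X]) hlt2
      rw [show algebraMap D[X] E[X] = mapRingHom g from rfl] at this
      rw [hQ₂c, comap_mapRingHom_map_C, hqD] at this
      exact lt_irrefl _ this
    -- Q₁ < Q₂ = q.map C, Q₁ ≠ ⊥, contradicting height (q.map C) = 1
    have hQ₁ne : Q₁ ≠ Q₂ := by
      intro h
      rw [h, hQ₂c] at hQ₁c
      exact hylt.ne hQ₁c.symm
    have hQ₁lt : Q₁ < q.map (C : E →+* E[X]) := by
      rw [hQ₂eq]; exact lt_of_le_of_ne hQ₁₂ hQ₁ne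
    have hQ₁bot : Q₁ = ⊥ := hqXht.2 ⟨Q₁, inferInstance⟩
      ((PrimeSpectrum.asIdeal_lt_asIdeal _ _).mpr hQ₁lt)
    -- but Q₁ contracts to y ≠ ⊥
    apply hy0
    rw [← hQ₁c, hQ₁bot]
    exact Ideal.comap_bot_of_injective _ hinjX

end Aux

/-- The strong S-property descends along integral ring extensions. -/
theorem stmt3 {A T : Type*} [CommRing A] [CommRing T] (f : A →+* T)
    (hinj : Function.Injective f) (hint : f.IsIntegral)
    (hT : StrongSRing T) : StrongSRing A := by
  intro p₀
  letI : Algebra A T := f.toAlgebra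
  haveI : Algebra.IsIntegral A T := ⟨hint⟩
  haveI := p₀.2
  obtain ⟨q₀, -, hq₀prime, hq₀c⟩ :=
    Ideal.exists_ideal_over_prime_of_isIntegral p₀.asIdeal (⊥ : Ideal T)
      (by rw [show algebraMap A T = f from rfl, Ideal.comap_bot_of_injective _ hinj]; exact bot_le)
  haveI := hq₀prime
  have hq₀c' : q₀.comap f = p₀.asIdeal := hq₀c
  exact key (Ideal.quotientMap q₀ f hq₀c'.ge) (Ideal.quotientMap_injective' hq₀c'.le)
    (quotientMap_isIntegral hint hq₀c'.ge) (hT ⟨q₀, hq₀prime⟩)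
end

section
/- Let A ⊆ T be an integral extension of commutative rings. If T is a stably strong S-ring (i.e., T[X₁,...,Xₙ] is a strong S-ring for each n ≥ 1), then A is a stably strong S-ring. -/
open Polynomial TensorProduct

section AuxStmt4


variable {A B : Type*} [CommRing A] [CommRing B]

private lemma polyMap_isIntegral (f : A →+* B) (hf : f.IsIntegral) :
    (Polynomial.mapRingHom f).IsIntegral := by
  letI : Algebra A[X] B[X] := (Polynomial.mapRingHom f).toAlgebra
  intro g
  show IsIntegral A[X] g
  induction g using Polynomial.induction_on' with
  | add p q hp hq => exact hp.add hq
  | monomial n b =>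
      have hX : IsIntegral A[X] (X : B[X]) := by
        have h := isIntegral_algebraMap (R := A[X]) (A := B[X]) (x := (X : A[X]))
        rwa [show (algebraMap A[X] B[X]) (X : A[X]) = X from Polynomial.map_X f] at h
      have hC : IsIntegral A[X] (Polynomial.C b : B[X]) := by
        obtain ⟨p, pmonic, hp⟩ := hf b
        refine ⟨p.map (Polynomial.C : A →+* A[X]), pmonic.map _, ?_⟩
        have hcomm : (Polynomial.mapRingHom f).comp (Polynomial.C : A →+* A[X])
            = (Polynomial.C : B →+* B[X]).comp f := by
          ext a; simp
        calc Polynomial.eval₂ (algebraMap A[X] B[X]) (Polynomial.C b)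
                (p.map (Polynomial.C : A →+* A[X]))
            = Polynomial.eval₂ ((Polynomial.mapRingHom f).comp (Polynomial.C : A →+* A[X]))
                (Polynomial.C b) p := Polynomial.eval₂_map _ _ _
          _ = Polynomial.eval₂ ((Polynomial.C : B →+* B[X]).comp f) (Polynomial.C b) p := by
                rw [hcomm]
          _ = Polynomial.C (Polynomial.eval₂ f b p) := (Polynomial.hom_eval₂ p f _ b).symm
          _ = 0 := by rw [hp, map_zero]
      rw [← Polynomial.C_mul_X_pow_eq_monomial]
      exact hC.mul (hX.pow n)

private lemma mvPolyMap_isIntegral {σ : Type*} (f : A →+* B) (hf : f.IsIntegral) :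
    (MvPolynomial.map (σ := σ) f).IsIntegral := by
  letI : Algebra (MvPolynomial σ A) (MvPolynomial σ B) := (MvPolynomial.map f).toAlgebra
  intro g
  show IsIntegral (MvPolynomial σ A) g
  induction g using MvPolynomial.induction_on with
  | C b =>
      obtain ⟨p, pmonic, hp⟩ := hf b
      refine ⟨p.map (MvPolynomial.C : A →+* MvPolynomial σ A), pmonic.map _, ?_⟩
      have hcomm : (MvPolynomial.map (σ := σ) f).comp (MvPolynomial.C : A →+* MvPolynomial σ A)
          = (MvPolynomial.C : B →+* MvPolynomial σ B).comp f := by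
        ext a; simp
      calc Polynomial.eval₂ (algebraMap (MvPolynomial σ A) (MvPolynomial σ B)) (MvPolynomial.C b)
              (p.map (MvPolynomial.C : A →+* MvPolynomial σ A))
          = Polynomial.eval₂ ((MvPolynomial.map (σ := σ) f).comp
              (MvPolynomial.C : A →+* MvPolynomial σ A)) (MvPolynomial.C b) p :=
            Polynomial.eval₂_map _ _ _
        _ = Polynomial.eval₂ ((MvPolynomial.C : B →+* MvPolynomial σ B).comp f)
              (MvPolynomial.C b) p := by rw [hcomm]
        _ = MvPolynomial.C (Polynomial.eval₂ f b p) := (Polynomial.hom_eval₂ p f _ b).symm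
        _ = 0 := by rw [hp, map_zero]
  | add p q hp hq => exact hp.add hq
  | mul_X p i hp =>
      have hX : IsIntegral (MvPolynomial σ A) (MvPolynomial.X i : MvPolynomial σ B) := by
        have h := isIntegral_algebraMap (R := MvPolynomial σ A) (A := MvPolynomial σ B)
          (x := (MvPolynomial.X i : MvPolynomial σ A))
        rwa [show (algebraMap (MvPolynomial σ A) (MvPolynomial σ B)) (MvPolynomial.X i)
          = MvPolynomial.X i from MvPolynomial.map_X f i] at h
      exact hp.mul hX



variable {A B : Type*} [CommRing A] [CommRing B]

private lemma primeSpectrum_not_isMin {R : Type*} [CommRing R] [IsDomain R]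
    {x : PrimeSpectrum R} (hx : x.asIdeal ≠ ⊥) : ¬ IsMin x := by
  intro h
  have hb : (⟨⊥, Ideal.bot_prime⟩ : PrimeSpectrum R) ≤ x :=
    (PrimeSpectrum.asIdeal_le_asIdeal _ _).mp bot_le
  exact hx (le_antisymm ((PrimeSpectrum.asIdeal_le_asIdeal _ _).mpr (h hb)) bot_le)


private lemma isSDomain_descent [IsDomain A] [IsDomain B] (f : A →+* B)
    (hinj : Function.Injective f) (hint : f.IsIntegral)
    (hB : IsSDomain B) : IsSDomain A := by
  intro p hp P hP
  set F : A[X] →+* B[X] := Polynomial.mapRingHom f with hFdef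
  have hFinj : Function.Injective F := fun a b h => Polynomial.map_injective f hinj h
  have hFint : F.IsIntegral := polyMap_isIntegral f hint
  letI : Algebra A[X] B[X] := F.toAlgebra
  haveI : Algebra.IsIntegral A[X] B[X] := ⟨hFint⟩
  letI : Algebra A B := f.toAlgebra
  have halg : algebraMap A[X] B[X] = F := rfl
  -- p is nonzero
  have hpbot : p.asIdeal ≠ ⊥ := by
    intro h
    have hmin : IsMin p := fun y hy => by
      have : y.asIdeal ≤ ⊥ := h ▸ (PrimeSpectrum.asIdeal_le_asIdeal _ _).mpr hy
      exact (PrimeSpectrum.asIdeal_le_asIdeal _ _).mp (h ▸ le_bot_iff.mp this ▸ le_rfl)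
    rw [Order.height_eq_zero.mpr hmin] at hp
    exact one_ne_zero hp.symm
  have hPbot : P.asIdeal ≠ ⊥ := by
    rw [hP]
    obtain ⟨a, ha, ha0⟩ := Submodule.exists_mem_ne_zero_of_ne_bot hpbot
    intro h
    have : (C a : A[X]) ∈ (⊥ : Ideal A[X]) := h ▸ Ideal.mem_map_of_mem _ ha
    exact ha0 (by simpa [Polynomial.C_eq_zero] using Ideal.mem_bot.mp this)
  -- key: everything strictly below P is minimal
  have key : ∀ P₁ : PrimeSpectrum A[X], P₁ < P → IsMin P₁ := by
    intro P₁ hP₁ P₂ h₂₁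
    by_contra hn
    have hP₂lt : P₂ < P₁ := lt_of_le_of_ne h₂₁ (fun h => hn (le_of_eq h.symm))
    -- lift the chain P₂ < P₁ < P to B[X]
    obtain ⟨Q₂, -, hQ₂p, hQ₂c⟩ :=
      Ideal.exists_ideal_over_prime_of_isIntegral P₂.asIdeal (⊥ : Ideal B[X])
        (by rw [halg, Ideal.comap_bot_of_injective F hFinj]; exact bot_le)
    haveI := hQ₂p
    obtain ⟨Q₁, hQ₁ge, hQ₁p, hQ₁c⟩ :=
      Ideal.exists_ideal_over_prime_of_isIntegral P₁.asIdeal Q₂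
        (by rw [hQ₂c]; exact ((PrimeSpectrum.asIdeal_le_asIdeal _ _).mpr hP₂lt.le))
    haveI := hQ₁p
    obtain ⟨Q, hQge, hQp, hQc⟩ :=
      Ideal.exists_ideal_over_prime_of_isIntegral P.asIdeal Q₁
        (by rw [hQ₁c]; exact ((PrimeSpectrum.asIdeal_le_asIdeal _ _).mpr hP₁.le))
    haveI := hQp
    -- the contraction q of Q to B
    set q : Ideal B := Q.comap (Polynomial.C : B →+* B[X]) with hqdef
    haveI : q.IsPrime := Ideal.IsPrime.comap _
    have hcomm : (Polynomial.C : B →+* B[X]).comp f = F.comp (Polynomial.C : A →+* A[X]) := by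
      ext a; simp [hFdef]
    have hqc : q.comap f = p.asIdeal := by
      have h2 : (p.asIdeal.map (C : A →+* A[X])).comap (C : A →+* A[X]) = p.asIdeal := by
        ext a
        simp only [Ideal.mem_comap, Ideal.mem_map_C_iff, Polynomial.coeff_C]
        constructor
        · intro h; simpa using h 0
        · intro h n; by_cases hn : n = 0 <;> simp [hn, h]
      calc q.comap f = Q.comap ((Polynomial.C : B →+* B[X]).comp f) := Ideal.comap_comap _ _
        _ = Q.comap (F.comp (Polynomial.C : A →+* A[X])) := by rw [hcomm]
        _ = (Q.comap F).comap (Polynomial.C : A →+* A[X]) := (Ideal.comap_comap _ _).symm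
        _ = p.asIdeal := by rw [← halg, hQc, hP, h2]
    -- q[X] = Q
    haveI : (q.map (Polynomial.C : B →+* B[X])).IsPrime :=
      Ideal.isPrime_map_C_of_isPrime
    have hcomap_eq : (q.map (Polynomial.C : B →+* B[X])).comap (algebraMap A[X] B[X])
        = P.asIdeal := by
      ext g
      rw [hP]
      simp only [Ideal.mem_comap, Ideal.mem_map_C_iff]
      refine forall_congr' fun n => ?_
      have hcoeff : ((algebraMap A[X] B[X]) g).coeff n = f (g.coeff n) := by
        rw [halg, hFdef, Polynomial.coe_mapRingHom, Polynomial.coeff_map]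
      rw [hcoeff, ← hqc]
      exact Iff.rfl
    have heq : q.map (Polynomial.C : B →+* B[X]) = Q := by
      have hle' : q.map (Polynomial.C : B →+* B[X]) ≤ Q := Ideal.map_le_iff_le_comap.mpr le_rfl
      by_contra hne
      obtain ⟨hle2, x, hxQ, hxq⟩ := SetLike.lt_iff_le_and_exists.mp (lt_of_le_of_ne hle' hne)
      have hcl := Ideal.comap_lt_comap_of_integral_mem_sdiff (R := A[X]) (S := B[X])
        (I := q.map (Polynomial.C : B →+* B[X])) (J := Q) hle2 ⟨hxQ, hxq⟩ (hFint x)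
      rw [hcomap_eq, hQc] at hcl
      exact lt_irrefl _ hcl
    -- q has height 1
    set qP : PrimeSpectrum B := ⟨q, inferInstance⟩ with hqP
    have hqbot : q ≠ ⊥ := by
      intro h
      apply hpbot
      rw [← hqc, h]
      exact Ideal.comap_bot_of_injective f hinj
    have hq1 : Order.height qP = 1 := by
      apply le_antisymm
      · have hmono : StrictMono (fun x : PrimeSpectrum B =>
            (⟨x.asIdeal.comap f, Ideal.IsPrime.comap f⟩ : PrimeSpectrum A)) := by
          intro x y hxy
          have hlt : x.asIdeal < y.asIdeal := (PrimeSpectrum.asIdeal_lt_asIdeal _ _).mpr hxy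
          obtain ⟨hle, z, hzJ, hzI⟩ := SetLike.lt_iff_le_and_exists.mp hlt
          have := Ideal.comap_lt_comap_of_integral_mem_sdiff (R := A) (S := B)
            (I := x.asIdeal) (J := y.asIdeal) hle ⟨hzJ, hzI⟩ (hint z)
          exact (PrimeSpectrum.asIdeal_lt_asIdeal _ _).mp this
        have h1 := Order.height_le_height_apply_of_strictMono _ hmono qP
        have h2 : (⟨qP.asIdeal.comap f, Ideal.IsPrime.comap f⟩ : PrimeSpectrum A) = p :=
          PrimeSpectrum.ext hqc
        rw [h2] at h1
        rw [← hp]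
        exact h1
      · rw [ENat.one_le_iff_ne_zero]
        intro h0
        exact primeSpectrum_not_isMin hqbot (Order.height_eq_zero.mp h0)
    -- apply the S-domain hypothesis for B
    have hQ1 : Order.height (⟨Q, hQp⟩ : PrimeSpectrum B[X]) = 1 :=
      hB qP hq1 ⟨Q, hQp⟩ heq.symm
    -- but Q₂ < Q₁ < Q gives height Q ≥ 2, contradiction
    have hQ₁lt : (⟨Q₁, hQ₁p⟩ : PrimeSpectrum B[X]) < ⟨Q, hQp⟩ := by
      rw [← PrimeSpectrum.asIdeal_lt_asIdeal]
      show Q₁ < Q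
      refine lt_of_le_of_ne hQge (fun h => ?_)
      have : P₁.asIdeal = P.asIdeal := by rw [← hQ₁c, ← hQc, h]
      exact hP₁.ne (PrimeSpectrum.ext this)
    have hQ₂lt : (⟨Q₂, hQ₂p⟩ : PrimeSpectrum B[X]) < ⟨Q₁, hQ₁p⟩ := by
      rw [← PrimeSpectrum.asIdeal_lt_asIdeal]
      show Q₂ < Q₁
      refine lt_of_le_of_ne hQ₁ge (fun h => ?_)
      have : P₂.asIdeal = P₁.asIdeal := by rw [← hQ₂c, ← hQ₁c, h]
      exact hP₂lt.ne (PrimeSpectrum.ext this)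
    have hlt1 : Order.height (⟨Q₁, hQ₁p⟩ : PrimeSpectrum B[X]) < ((1 : ℕ) : ℕ∞) := by
      have := Order.height_le_coe_iff.mp (by rw [Nat.cast_one]; exact le_of_eq hQ1)
      exact this _ hQ₁lt
    rw [Nat.cast_one, ENat.lt_one_iff_eq_zero] at hlt1
    have hmin := Order.height_eq_zero.mp hlt1
    exact hQ₂lt.not_ge (hmin hQ₂lt.le)
  -- conclude
  apply le_antisymm
  · rw [← Nat.cast_one, Order.height_le_coe_iff]
    intro y hy
    rw [Order.height_eq_zero.mpr (key y hy)]
    exact_mod_cast Nat.zero_lt_one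
  · rw [ENat.one_le_iff_ne_zero]
    intro h0
    exact primeSpectrum_not_isMin hPbot (Order.height_eq_zero.mp h0)


private lemma strongSRing_descent {A B : Type*} [CommRing A] [CommRing B] (f : A →+* B)
    (hinj : Function.Injective f) (hint : f.IsIntegral)
    (hB : StrongSRing B) : StrongSRing A := by
  intro p
  letI : Algebra A B := f.toAlgebra
  haveI : Algebra.IsIntegral A B := ⟨hint⟩
  obtain ⟨q, -, hqp, hqc⟩ :=
    Ideal.exists_ideal_over_prime_of_isIntegral p.asIdeal (⊥ : Ideal B)
      (by rw [show (algebraMap A B) = f from rfl, Ideal.comap_bot_of_injective f hinj]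
          exact bot_le)
  haveI := hqp
  have hle : p.asIdeal ≤ q.comap f := le_of_eq hqc.symm
  have ginj : Function.Injective (Ideal.quotientMap q f hle) :=
    Ideal.quotientMap_injective' (le_of_eq hqc)
  have gint : (Ideal.quotientMap q f hle).IsIntegral := by
    intro x
    obtain ⟨x, rfl⟩ := Ideal.Quotient.mk_surjective x
    obtain ⟨pp, pmonic, hpx⟩ := hint x
    refine ⟨pp.map (Ideal.Quotient.mk _), pmonic.map _, ?_⟩
    simpa only [Polynomial.hom_eval₂, Polynomial.eval₂_map, Ideal.quotientMap_comp_mk, map_zero] using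
      congr_arg (Ideal.Quotient.mk q) hpx
  exact isSDomain_descent (Ideal.quotientMap q f hle) ginj gint (hB ⟨q, hqp⟩)

end AuxStmt4

/-- The stably strong S-property descends along integral ring
extensions. -/
theorem stmt4 {A T : Type*} [CommRing A] [CommRing T] (f : A →+* T)
    (hinj : Function.Injective f) (hint : f.IsIntegral)
    (hT : StablyStrongSRing T) : StablyStrongSRing A := by
  intro n hn
  exact strongSRing_descent (MvPolynomial.map f) (MvPolynomial.map_injective f hinj)
    (mvPolyMap_isIntegral f hint) (hT n hn)
end

section
/- Let A and B be algebras over a field k such that the tensor product A ⊗_k B satisfies MPC. Then A satisfies MPC and B satisfies MPC. -/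
open Polynomial TensorProduct

lemma aux_pow_mul_mem {R : Type*} [CommRing R] {I P : Ideal R} (hP : P ∈ I.minimalPrimes)
    {x : R} (hx : x ∈ P) : ∃ (n : ℕ) (s : R), s ∉ P ∧ s * x ^ n ∈ I := by
  have hP' : Minimal (fun q : Ideal R => q.IsPrime ∧ I ≤ q) P := hP
  by_contra hcon
  push_neg at hcon
  have hprime : P.IsPrime := hP'.prop.1
  set S : Submonoid R :=
    { carrier := {r | ∃ (n : ℕ) (s : R), s ∉ P ∧ r = s * x ^ n}
      mul_mem' := by
        rintro a b ⟨n, s, hs, rfl⟩ ⟨m, t, ht, rfl⟩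
        refine ⟨n + m, s * t, fun hmem => ((hprime.mul_mem_iff_mem_or_mem).1 hmem).elim hs ht, by ring⟩
      one_mem' := ⟨0, 1, fun h1 => hprime.ne_top ((Ideal.eq_top_iff_one P).2 h1), by ring⟩ }
  have hdisj : Disjoint (I : Set R) (S : Set R) := by
    rw [Set.disjoint_left]
    rintro r hr ⟨n, s, hs, rfl⟩
    exact hcon n s hs hr
  obtain ⟨Q, hQ, hIQ, hQS⟩ := Ideal.exists_le_prime_disjoint I S hdisj
  have hQP : Q ≤ P := by
    intro r hr
    by_contra hrP
    exact Set.disjoint_left.1 hQS hr ⟨0, r, hrP, by ring⟩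
  have hPQ : P ≤ Q := hP'.le_of_le ⟨hQ, hIQ⟩ hQP
  exact Set.disjoint_left.1 hQS (hPQ hx) ⟨1, 1, fun h1 => hprime.ne_top ((Ideal.eq_top_iff_one P).2 h1), by ring⟩

set_option synthInstance.maxHeartbeats 1000000 in
lemma aux_key_comap {k A B : Type*} [Field k] [CommRing A] [CommRing B] [Algebra k A]
    [Algebra k B] {p : Ideal A} (hp : p.IsPrime) {P : Ideal (A ⊗[k] B)}
    (hP : P ∈ (p.map (Algebra.TensorProduct.includeLeft : A →ₐ[k] A ⊗[k] B)).minimalPrimes) :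
    P.comap (Algebra.TensorProduct.includeLeft : A →ₐ[k] A ⊗[k] B) = p := by
  haveI := hp
  set f : A →ₐ[k] A ⊗[k] B := Algebra.TensorProduct.includeLeft with hf
  have hP' : Minimal (fun q : Ideal (A ⊗[k] B) => q.IsPrime ∧ p.map f ≤ q) P := hP
  set g : A ⊗[k] B →ₐ[k] (A ⧸ p) ⊗[k] B :=
    Algebra.TensorProduct.map (Ideal.Quotient.mkₐ k p) (AlgHom.id k B) with hg
  have hker : RingHom.ker g = p.map f := by
    rw [hg, Algebra.TensorProduct.rTensor_ker (Ideal.Quotient.mkₐ k p)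
      (Ideal.Quotient.mkₐ_surjective k p)]
    congr 1
    exact Ideal.mk_ker
  refine le_antisymm ?_ (le_trans Ideal.le_comap_map (Ideal.comap_mono hP'.prop.2))
  intro a ha
  rw [Ideal.mem_comap] at ha
  by_contra hap
  obtain ⟨n, s, hs, hsx⟩ := aux_pow_mul_mem hP ha
  rw [← hker, RingHom.mem_ker] at hsx
  have hfa : g (f a) = algebraMap (A ⧸ p) ((A ⧸ p) ⊗[k] B) (Ideal.Quotient.mk p a) := by
    rw [hf, hg]
    simp [Algebra.TensorProduct.includeLeft_apply, Algebra.TensorProduct.map_tmul,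
      Algebra.TensorProduct.algebraMap_apply]
  have h0 : algebraMap (A ⧸ p) ((A ⧸ p) ⊗[k] B) ((Ideal.Quotient.mk p a) ^ n) * g s = 0 := by
    rw [map_pow, ← hfa, ← map_pow, mul_comm, ← map_mul, hsx]
  have hd : (Ideal.Quotient.mk p a) ^ n ≠ 0 :=
    pow_ne_zero n (by simpa [Ideal.Quotient.eq_zero_iff_mem] using hap)
  haveI hfree : Module.Free (A ⧸ p) ((A ⧸ p) ⊗[k] B) := Module.Free.tensor
  haveI : Module.IsTorsionFree (A ⧸ p) ((A ⧸ p) ⊗[k] B) := inferInstance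
  rw [← Algebra.smul_def] at h0
  have hgs : g s = 0 := (smul_eq_zero.mp h0).resolve_left hd
  exact hs (hP'.prop.2 (hker ▸ RingHom.mem_ker.mpr hgs))

lemma aux_key_min {k A B : Type*} [Field k] [CommRing A] [CommRing B] [Algebra k A]
    [Algebra k B] {p : Ideal A} (hp : p ∈ minimalPrimes A) {P : Ideal (A ⊗[k] B)}
    (hP : P ∈ (p.map (Algebra.TensorProduct.includeLeft : A →ₐ[k] A ⊗[k] B)).minimalPrimes) :
    P ∈ minimalPrimes (A ⊗[k] B) := by
  set f : A →ₐ[k] A ⊗[k] B := Algebra.TensorProduct.includeLeft with hf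
  have hp' : Minimal (fun q : Ideal A => q.IsPrime ∧ ⊥ ≤ q) p := hp
  have hP' : Minimal (fun q : Ideal (A ⊗[k] B) => q.IsPrime ∧ p.map f ≤ q) P := hP
  refine ⟨⟨hP'.prop.1, bot_le⟩, ?_⟩
  rintro J ⟨hJ, -⟩ hJP
  haveI := hJ
  have h1 : J.comap f ≤ p := (aux_key_comap hp'.prop.1 hP) ▸ Ideal.comap_mono hJP
  have h2 : p ≤ J.comap f := hp'.le_of_le ⟨Ideal.IsPrime.comap _, bot_le⟩ h1
  have h3 : p.map f ≤ J := le_trans (Ideal.map_mono h2) (Ideal.map_comap_le)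
  exact hP'.le_of_le ⟨hJ, h3⟩ hJP

lemma aux_mpc_of_ringEquiv {R S : Type*} [CommRing R] [CommRing S] (e : R ≃+* S)
    (h : MPC S) : MPC R := by
  have key : ∀ r : Ideal R, r ∈ minimalPrimes R → r.map (e : R →+* S) ∈ minimalPrimes S := by
    intro r hr
    have hr' : Minimal (fun q : Ideal R => q.IsPrime ∧ ⊥ ≤ q) r := hr
    haveI := hr'.prop.1
    refine ⟨⟨Ideal.map_isPrime_of_equiv e, bot_le⟩, ?_⟩
    rintro J ⟨hJ, -⟩ hJr
    haveI := hJ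
    have h1 : J.comap (e : R →+* S) ≤ r := by
      have := Ideal.comap_mono (f := (e : R →+* S)) hJr
      rwa [Ideal.comap_map_of_bijective (e : R →+* S) e.bijective] at this
    have h2 : r ≤ J.comap (e : R →+* S) := hr'.le_of_le ⟨Ideal.IsPrime.comap _, bot_le⟩ h1
    exact le_trans (Ideal.map_mono h2) (Ideal.map_comap_le)
  intro p hp q hq hpq
  have hne : p.map (e : R →+* S) ≠ q.map (e : R →+* S) := by
    intro hEq
    apply hpq
    have := congrArg (Ideal.comap (e : R →+* S)) hEq
    rwa [Ideal.comap_map_of_bijective (e : R →+* S) e.bijective,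
      Ideal.comap_map_of_bijective (e : R →+* S) e.bijective] at this
  have := h _ (key p hp) _ (key q hq) hne
  rw [← Ideal.map_sup] at this
  have := congrArg (Ideal.comap (e : R →+* S)) this
  rwa [Ideal.comap_map_of_bijective (e : R →+* S) e.bijective, Ideal.comap_top] at this

lemma aux_mpc_left {k A B : Type*} [Field k] [CommRing A] [CommRing B] [Nontrivial B]
    [Algebra k A] [Algebra k B] (h : MPC (A ⊗[k] B)) : MPC A := by
  intro p hp q hq hpq
  by_contra hne
  obtain ⟨m, hm, hpqm⟩ := Ideal.exists_le_maximal _ hne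
  set f : A →ₐ[k] A ⊗[k] B := Algebra.TensorProduct.includeLeft with hf
  have hmap_ne : m.map f ≠ ⊤ := by
    intro htop
    have hker : RingHom.ker (Algebra.TensorProduct.map (Ideal.Quotient.mkₐ k m)
        (AlgHom.id k B)) = m.map f := by
      rw [Algebra.TensorProduct.rTensor_ker (Ideal.Quotient.mkₐ k m)
        (Ideal.Quotient.mkₐ_surjective k m)]
      congr 1
      exact Ideal.mk_ker
    haveI : Nontrivial (A ⧸ m) := Ideal.Quotient.nontrivial_iff.mpr hm.ne_top
    haveI : Nontrivial ((A ⧸ m) ⊗[k] B) :=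
      Module.FaithfullyFlat.rTensor_nontrivial k B (A ⧸ m)
    have h1 : (1 : A ⊗[k] B) ∈ RingHom.ker (Algebra.TensorProduct.map (Ideal.Quotient.mkₐ k m)
        (AlgHom.id k B)) := by
      rw [hker, htop]
      trivial
    rw [RingHom.mem_ker, map_one] at h1
    exact one_ne_zero h1
  obtain ⟨M, hM, hmM⟩ := Ideal.exists_le_maximal _ hmap_ne
  haveI := hM.isPrime
  obtain ⟨P, hPmem, hPM⟩ := Ideal.exists_minimalPrimes_le
    (le_trans (Ideal.map_mono (le_trans le_sup_left hpqm)) hmM)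
  obtain ⟨Q, hQmem, hQM⟩ := Ideal.exists_minimalPrimes_le
    (le_trans (Ideal.map_mono (le_trans le_sup_right hpqm)) hmM)
  have hp' : Minimal (fun r : Ideal A => r.IsPrime ∧ ⊥ ≤ r) p := hp
  have hq' : Minimal (fun r : Ideal A => r.IsPrime ∧ ⊥ ≤ r) q := hq
  have hcP := aux_key_comap hp'.prop.1 hPmem
  have hcQ := aux_key_comap hq'.prop.1 hQmem
  have hPQ : P ≠ Q := fun e => hpq (by rw [← hcP, ← hcQ, e])
  have htop := h P (aux_key_min hp hPmem) Q (aux_key_min hq hQmem) hPQ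
  have hle : (⊤ : Ideal (A ⊗[k] B)) ≤ M := htop ▸ sup_le hPM hQM
  exact hM.ne_top (top_le_iff.mp hle)


/-- If `A ⊗ₖ B` satisfies MPC, then so do `A` and `B`. -/
theorem stmt6 {k A B : Type*} [Field k] [CommRing A] [CommRing B] [Nontrivial A]
    [Nontrivial B] [Algebra k A] [Algebra k B]
    (h : MPC (A ⊗[k] B)) : MPC A ∧ MPC B :=
  ⟨aux_mpc_left h,
    aux_mpc_left (aux_mpc_of_ringEquiv (Algebra.TensorProduct.comm k B A).toRingEquiv h)⟩
end

section
/- Let k = ℝ, K = ℂ, and A = ℝ + X·ℂ[X]_(X), the pullback subring of V = ℂ[X]_(X) consisting of power-series-type elements with real constant term. Then A is a local one-dimensional domain satisfying MPC, but ℂ ⊗_ℝ A does not satisfy MPC: its two minimal primes are both contained in a common maximal ideal. -/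
open Polynomial TensorProduct

noncomputable section

/-- The prime ideal `(X)` of `ℂ[X]`, realized as the kernel of evaluation at `0`. -/
abbrev P0 : Ideal (Polynomial ℂ) := RingHom.ker (Polynomial.evalRingHom (0 : ℂ))

instance : P0.IsPrime := RingHom.ker_isPrime _

/-- The DVR `V = ℂ[X]_(X)`. -/
abbrev V : Type := Localization.AtPrime P0

/-- The canonical embedding `ℂ → V`. -/
def cToV : ℂ →+* V := (algebraMap (Polynomial ℂ) V).comp (Polynomial.C : ℂ →+* Polynomial ℂ)

/-- The subring `A = ℝ + X·ℂ[X]_(X)` of `V`: those elements whose residue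
(modulo the maximal ideal of the local ring `V`) is real. -/
def Asub : Subring V :=
  Subring.comap (IsLocalRing.residue V)
    (((IsLocalRing.residue V).comp (cToV.comp (algebraMap ℝ ℂ))).range)

/-- The structure map `ℝ → A`. -/
def rToA : ℝ →+* Asub :=
  (cToV.comp (algebraMap ℝ ℂ)).codRestrict Asub.toSubsemiring (fun r => ⟨r, rfl⟩)

instance : Algebra ℝ Asub := rToA.toAlgebra

set_option maxHeartbeats 1000000
set_option synthInstance.maxHeartbeats 400000

lemma hP0 : P0 ≠ ⊥ := by
  intro h
  have hX : (X : ℂ[X]) ∈ P0 := by simp [RingHom.mem_ker]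
  rw [h] at hX
  simp at hX

instance : IsDiscreteValuationRing V :=
  IsLocalization.AtPrime.isDiscreteValuationRing_of_dedekind_domain (Polynomial ℂ) hP0 V

lemma injCXV : Function.Injective (algebraMap (Polynomial ℂ) V) :=
  IsLocalization.injective V (P0.primeCompl_le_nonZeroDivisors)

instance : CharZero V := charZero_of_injective_algebraMap injCXV

lemma injcToV : Function.Injective cToV := injCXV.comp (Polynomial.C_injective)

lemma mem_mV_of_mem_P0 {p : Polynomial ℂ} (hp : p ∈ P0) :
    algebraMap (Polynomial ℂ) V p ∈ IsLocalRing.maximalIdeal V := by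
  have := IsLocalization.AtPrime.comap_maximalIdeal V P0
  rw [← this] at hp
  exact hp

lemma residue_eq_zero_iff {v : V} :
    IsLocalRing.residue V v = 0 ↔ v ∈ IsLocalRing.maximalIdeal V :=
  Ideal.Quotient.eq_zero_iff_mem

abbrev ρ : ℂ →+* IsLocalRing.ResidueField V := (IsLocalRing.residue V).comp cToV

lemma ρ_eq_zero_iff {z : ℂ} : ρ z = 0 ↔ z = 0 := by
  constructor
  · intro h
    have h2 : cToV z ∈ IsLocalRing.maximalIdeal V := residue_eq_zero_iff.mp h
    have h3 : (C z : Polynomial ℂ) ∈ P0 := by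
      rw [← IsLocalization.AtPrime.comap_maximalIdeal V P0]; exact h2
    simpa [RingHom.mem_ker] using h3
  · rintro rfl; simp

lemma residue_surj' (v : V) : ∃ c : ℂ, IsLocalRing.residue V v = ρ c := by
  obtain ⟨⟨f, s⟩, hfs⟩ := IsLocalization.surj P0.primeCompl v
  have hs0 : (s : Polynomial ℂ).eval 0 ≠ 0 := by
    have h2 : (↑s : Polynomial ℂ) ∉ P0 := s.2
    simpa [RingHom.mem_ker] using h2
  have key : ∀ g : Polynomial ℂ, IsLocalRing.residue V (algebraMap (Polynomial ℂ) V g) = ρ (g.eval 0) := by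
    intro g
    have hmem : g - C (g.eval 0) ∈ P0 := by simp [RingHom.mem_ker]
    have := residue_eq_zero_iff.mpr (mem_mV_of_mem_P0 hmem)
    rw [map_sub, map_sub] at this
    have : IsLocalRing.residue V (algebraMap (Polynomial ℂ) V g)
        = IsLocalRing.residue V (algebraMap (Polynomial ℂ) V (C (g.eval 0))) := by
      linear_combination this
    simpa [cToV] using this
  refine ⟨f.eval 0 / (s : Polynomial ℂ).eval 0, ?_⟩
  have h1 := congrArg (IsLocalRing.residue V) hfs
  rw [map_mul, key, key] at h1
  have hρs : ρ ((s : Polynomial ℂ).eval 0) ≠ 0 := fun h => hs0 (ρ_eq_zero_iff.mp h)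
  rw [map_div₀, eq_div_iff hρs]
  exact h1

lemma mem_Asub_iff {v : V} : v ∈ Asub ↔ ∃ r : ℝ, IsLocalRing.residue V v = ρ (r : ℂ) := by
  constructor
  · rintro ⟨r, hr⟩
    exact ⟨r, by simpa [Complex.coe_algebraMap] using hr.symm⟩
  · rintro ⟨r, hr⟩
    exact ⟨r, by simpa [Complex.coe_algebraMap] using hr.symm⟩

lemma isUnit_of_residue_ne_zero (a : Asub) (h : IsLocalRing.residue V (a : V) ≠ 0) :
    IsUnit a := by
  obtain ⟨r, hr⟩ := mem_Asub_iff.mp a.2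
  have hr0 : (r : ℂ) ≠ 0 := by
    intro h0; apply h; rw [hr, h0, map_zero]
  have hu : IsUnit (a : V) := by
    by_contra hu
    exact h (residue_eq_zero_iff.mpr hu)
  obtain ⟨u, hu⟩ := hu
  have hinv : IsLocalRing.residue V ((↑u⁻¹ : V)) = ρ ((r : ℂ)⁻¹) := by
    have h1 : IsLocalRing.residue V (a : V) * IsLocalRing.residue V ((↑u⁻¹ : V)) = 1 := by
      rw [← map_mul, ← hu, Units.mul_inv, map_one]
    rw [hr] at h1
    have hρr : ρ (r : ℂ) ≠ 0 := fun hz => hr0 (ρ_eq_zero_iff.mp hz)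
    rw [map_inv₀]
    exact (inv_eq_of_mul_eq_one_right h1).symm
  have hmem : (↑u⁻¹ : V) ∈ Asub := mem_Asub_iff.mpr ⟨r⁻¹, by push_cast [hinv]; rfl⟩
  refine IsUnit.of_mul_eq_one (a := a) ⟨(↑u⁻¹ : V), hmem⟩ ?_
  ext
  push_cast
  rw [← hu, Units.mul_inv]

instance : IsLocalRing Asub := by
  apply IsLocalRing.of_isUnit_or_isUnit_one_sub_self
  intro a
  by_cases h : IsLocalRing.residue V (a : V) = 0
  · right
    apply isUnit_of_residue_ne_zero
    rw [AddSubgroupClass.coe_sub, map_sub]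
    simp [h]
  · exact Or.inl (isUnit_of_residue_ne_zero a h)

lemma mem_maximalIdeal_Asub {a : Asub} :
    a ∈ IsLocalRing.maximalIdeal Asub ↔ (a : V) ∈ IsLocalRing.maximalIdeal V := by
  constructor
  · intro ha
    by_contra hv
    have : IsLocalRing.residue V (a : V) ≠ 0 := fun h => hv (residue_eq_zero_iff.mp h)
    exact ha (isUnit_of_residue_ne_zero a this)
  · intro hv ha
    have : IsUnit (a : V) := (IsUnit.map Asub.subtype ha)
    exact (IsLocalRing.maximalIdeal.isMaximal V).ne_top (Ideal.eq_top_of_isUnit_mem _ hv this)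

lemma mem_Asub_of_mem_mV {v : V} (hv : v ∈ IsLocalRing.maximalIdeal V) : v ∈ Asub :=
  mem_Asub_iff.mpr ⟨0, by rw [residue_eq_zero_iff.mpr hv]; simp⟩

lemma prime_eq_maximal (P : Ideal Asub) (hP : P.IsPrime) (hne : P ≠ ⊥) :
    P = IsLocalRing.maximalIdeal Asub := by
  have hle : P ≤ IsLocalRing.maximalIdeal Asub := IsLocalRing.le_maximalIdeal hP.ne_top
  refine le_antisymm hle ?_
  obtain ⟨a, haP, ha0⟩ := Submodule.exists_mem_ne_zero_of_ne_bot hne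
  have haV : (a : V) ∈ IsLocalRing.maximalIdeal V := mem_maximalIdeal_Asub.mp (hle haP)
  obtain ⟨ϖ, hϖ⟩ := IsDiscreteValuationRing.exists_irreducible V
  have hspan := (IsDiscreteValuationRing.irreducible_iff_uniformizer ϖ).mp hϖ
  have ha0V : (a : V) ≠ 0 := fun h => ha0 (Subtype.ext h)
  obtain ⟨n, u, hau⟩ := IsDiscreteValuationRing.eq_unit_mul_pow_irreducible ha0V hϖ
  intro b hb
  have hbV : (b : V) ∈ IsLocalRing.maximalIdeal V := mem_maximalIdeal_Asub.mp hb
  rw [hspan, Ideal.mem_span_singleton] at hbV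
  obtain ⟨w, hw⟩ := hbV
  have hϖm : ϖ ∈ IsLocalRing.maximalIdeal V := by
    rw [hspan]; exact Ideal.mem_span_singleton_self ϖ
  have hcm : (↑u⁻¹ : V) * ϖ * w ^ (n + 1) ∈ IsLocalRing.maximalIdeal V :=
    Ideal.mul_mem_right _ _ (Ideal.mul_mem_left _ _ hϖm)
  have key : (b : V) ^ (n + 1) = (a : V) * ((↑u⁻¹ : V) * ϖ * w ^ (n + 1)) := by
    rw [hw, hau]
    have huu : (↑u : V) * (↑u⁻¹ : V) = 1 := Units.mul_inv u
    calc (ϖ * w) ^ (n + 1) = ((↑u : V) * (↑u⁻¹ : V)) * (ϖ ^ n * (ϖ * w ^ (n + 1))) := by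
          rw [huu]; ring
      _ = (↑u : V) * ϖ ^ n * ((↑u⁻¹ : V) * ϖ * w ^ (n + 1)) := by ring
  have hbP : b ^ (n + 1) ∈ P := by
    have : b ^ (n + 1) = a * ⟨_, mem_Asub_of_mem_mV hcm⟩ := Subtype.ext (by push_cast; exact key)
    rw [this]
    exact Ideal.mul_mem_right _ _ haP
  exact hP.mem_of_pow_mem _ hbP

def xV : V := algebraMap (Polynomial ℂ) V X
lemma xV_mem : xV ∈ IsLocalRing.maximalIdeal V := mem_mV_of_mem_P0 (by simp [RingHom.mem_ker])
lemma xV_ne : xV ≠ 0 := by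
  intro h
  refine (X_ne_zero : (X : Polynomial ℂ) ≠ 0) (injCXV ?_)
  rw [map_zero]
  exact h
def xA : Asub := ⟨xV, mem_Asub_of_mem_mV xV_mem⟩
lemma mA_ne_bot : IsLocalRing.maximalIdeal Asub ≠ ⊥ := by
  intro h
  have hx : xA ∈ IsLocalRing.maximalIdeal Asub := mem_maximalIdeal_Asub.mpr xV_mem
  rw [h, Ideal.mem_bot] at hx
  exact xV_ne (congrArg Subtype.val hx)

lemma dimA : ringKrullDim Asub = 1 := by
  have _ : IsDomain Asub := inferInstance
  apply le_antisymm
  · show Order.krullDim (PrimeSpectrum Asub) ≤ 1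
    apply iSup_le
    intro l
    suffices hl : l.length ≤ 1 by exact_mod_cast hl
    by_contra hlen
    push_neg at hlen
    have h2 : 2 ≤ l.length := hlen
    have h01 : l.toFun ⟨0, by omega⟩ < l.toFun ⟨1, by omega⟩ :=
      l.strictMono (Fin.mk_lt_mk.mpr (by omega))
    have h12 : l.toFun ⟨1, by omega⟩ < l.toFun ⟨2, by omega⟩ :=
      l.strictMono (Fin.mk_lt_mk.mpr (by omega))
    have hq1 : (l.toFun ⟨1, by omega⟩).asIdeal ≠ ⊥ := by
      intro h
      have := (PrimeSpectrum.asIdeal_lt_asIdeal _ _).mpr h01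
      rw [h] at this
      exact absurd this (not_lt_bot)
    have hq2 : (l.toFun ⟨2, by omega⟩).asIdeal ≠ ⊥ := by
      intro h
      have := (PrimeSpectrum.asIdeal_lt_asIdeal _ _).mpr h12
      rw [h] at this
      exact absurd this (not_lt_bot)
    have e1 := prime_eq_maximal _ (l.toFun ⟨1, by omega⟩).isPrime hq1
    have e2 := prime_eq_maximal _ (l.toFun ⟨2, by omega⟩).isPrime hq2
    have := (PrimeSpectrum.asIdeal_lt_asIdeal _ _).mpr h12
    rw [e1, e2] at this
    exact lt_irrefl _ this
  · have hlt : (⟨⊥, Ideal.bot_prime⟩ : PrimeSpectrum Asub)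
        < ⟨IsLocalRing.maximalIdeal Asub, inferInstance⟩ := by
      rw [← PrimeSpectrum.asIdeal_lt_asIdeal]
      exact bot_lt_iff_ne_bot.mpr mA_ne_bot
    let l : LTSeries (PrimeSpectrum Asub) :=
      ⟨1, ![⟨⊥, Ideal.bot_prime⟩, ⟨IsLocalRing.maximalIdeal Asub, inferInstance⟩],
        by intro i; fin_cases i; simpa using hlt⟩
    have := Order.LTSeries.length_le_krullDim l
    simpa [ringKrullDim, l] using this

lemma mpcA : MPC Asub := by
  intro p hp q hq hne
  exfalso
  apply hne
  have hbot : minimalPrimes Asub = {⊥} := by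
    have : (⊥ : Ideal Asub).IsPrime := Ideal.bot_prime
    exact Ideal.minimalPrimes_eq_subsingleton_self
  rw [hbot] at hp hq
  rw [Set.mem_singleton_iff.mp hp, Set.mem_singleton_iff.mp hq]

-- tensor part
lemma algebraMap_R_V (r : ℝ) : algebraMap ℝ V r = cToV (algebraMap ℝ ℂ r) := by
  rw [IsScalarTower.algebraMap_apply ℝ (Polynomial ℂ) V,
    IsScalarTower.algebraMap_apply ℝ ℂ (Polynomial ℂ)]
  rfl

def f1 : ℂ →ₐ[ℝ] V := { cToV with commutes' := fun r => (algebraMap_R_V r).symm }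

def gA : Asub →ₐ[ℝ] V := { Asub.subtype with commutes' := fun r => (algebraMap_R_V r).symm }

def f2 : ℂ →ₐ[ℝ] V := f1.comp (Complex.conjAe.toAlgHom)

def φ₁ : ℂ ⊗[ℝ] Asub →ₐ[ℝ] V := Algebra.TensorProduct.productMap f1 gA
def φ₂ : ℂ ⊗[ℝ] Asub →ₐ[ℝ] V := Algebra.TensorProduct.productMap f2 gA

lemma f1_apply (z : ℂ) : f1 z = cToV z := rfl
lemma gA_apply (a : Asub) : gA a = (a : V) := rfl
lemma f2_apply (z : ℂ) : f2 z = cToV ((starRingEnd ℂ) z) := rfl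

lemma tensor_repr (t : ℂ ⊗[ℝ] Asub) :
    ∃ a b : Asub, t = (1 : ℂ) ⊗ₜ[ℝ] a + Complex.I ⊗ₜ[ℝ] b := by
  induction t with
  | zero => exact ⟨0, 0, by simp⟩
  | tmul z a =>
    refine ⟨z.re • a, z.im • a, ?_⟩
    have h1 : ((z.re : ℂ)) = z.re • (1 : ℂ) := by simp [Complex.real_smul]
    have h2 : ((z.im : ℂ) * Complex.I) = z.im • Complex.I := by simp [Complex.real_smul]
    calc z ⊗ₜ[ℝ] a = ((z.re : ℂ) + (z.im : ℂ) * Complex.I) ⊗ₜ[ℝ] a := by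
          rw [Complex.re_add_im]
      _ = ((z.re : ℂ)) ⊗ₜ[ℝ] a + ((z.im : ℂ) * Complex.I) ⊗ₜ[ℝ] a := add_tmul _ _ _
      _ = (1 : ℂ) ⊗ₜ[ℝ] (z.re • a) + Complex.I ⊗ₜ[ℝ] (z.im • a) := by
          rw [h1, h2, smul_tmul, smul_tmul]
  | add x y hx hy =>
    obtain ⟨a, b, rfl⟩ := hx
    obtain ⟨a', b', rfl⟩ := hy
    exact ⟨a + a', b + b', by rw [tmul_add, tmul_add]; ring⟩

lemma φ₁_apply (a b : Asub) :
    φ₁ ((1 : ℂ) ⊗ₜ[ℝ] a + Complex.I ⊗ₜ[ℝ] b) = (a : V) + cToV Complex.I * (b : V) := by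
  simp [φ₁, Algebra.TensorProduct.productMap_apply_tmul, f1_apply, gA_apply]

lemma φ₂_apply (a b : Asub) :
    φ₂ ((1 : ℂ) ⊗ₜ[ℝ] a + Complex.I ⊗ₜ[ℝ] b) = (a : V) - cToV Complex.I * (b : V) := by
  simp [φ₂, Algebra.TensorProduct.productMap_apply_tmul, f2_apply, gA_apply, Complex.conj_I, sub_eq_add_neg, neg_mul]
  ring

lemma inj_pair (t : ℂ ⊗[ℝ] Asub) (h1 : φ₁ t = 0) (h2 : φ₂ t = 0) : t = 0 := by
  obtain ⟨a, b, rfl⟩ := tensor_repr t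
  rw [φ₁_apply] at h1
  rw [φ₂_apply] at h2
  have ha : (2 : V) * (a : V) = 0 := by linear_combination h1 + h2
  have ha0 : (a : V) = 0 := by
    rcases mul_eq_zero.mp ha with h | h
    · exact absurd h two_ne_zero
    · exact h
  have hb : cToV Complex.I * (b : V) = 0 := by linear_combination h1 - ha0
  have hb0 : (b : V) = 0 := by
    rcases mul_eq_zero.mp hb with h | h
    · exact absurd (injcToV (by rw [map_zero]; exact h)) Complex.I_ne_zero
    · exact h
  have haA : a = 0 := Subtype.ext (by simpa using ha0)
  have hbA : b = 0 := Subtype.ext (by simpa using hb0)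
  rw [haA, hbA]
  simp

lemma key_res (t : ℂ ⊗[ℝ] Asub) :
    ∃ z : ℂ, IsLocalRing.residue V (φ₁ t) = ρ z ∧
      IsLocalRing.residue V (φ₂ t) = ρ ((starRingEnd ℂ) z) := by
  obtain ⟨a, b, rfl⟩ := tensor_repr t
  obtain ⟨ra, hra⟩ := mem_Asub_iff.mp a.2
  obtain ⟨rb, hrb⟩ := mem_Asub_iff.mp b.2
  have hI : IsLocalRing.residue V (cToV Complex.I) = ρ Complex.I := rfl
  refine ⟨(ra : ℂ) + (rb : ℂ) * Complex.I, ?_, ?_⟩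
  · rw [φ₁_apply, map_add, map_mul, hra, hrb, hI, map_add, map_mul]
    ring
  · rw [φ₂_apply, map_sub, map_mul, hra, hrb, hI]
    simp only [map_add, map_mul, Complex.conj_ofReal, Complex.conj_I, map_neg]
    ring

lemma surj1 : Function.Surjective φ₁ := by
  intro v
  obtain ⟨c, hc⟩ := residue_surj' v
  have hw : v - cToV c ∈ IsLocalRing.maximalIdeal V := by
    rw [← residue_eq_zero_iff, map_sub, hc]
    show ρ c - ρ c = 0
    ring
  refine ⟨c ⊗ₜ[ℝ] 1 + (1 : ℂ) ⊗ₜ[ℝ] ⟨v - cToV c, mem_Asub_of_mem_mV hw⟩, ?_⟩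
  simp [φ₁, Algebra.TensorProduct.productMap_apply_tmul, f1_apply, gA_apply]

lemma surj2 : Function.Surjective φ₂ := by
  intro v
  obtain ⟨c, hc⟩ := residue_surj' v
  have hw : v - cToV c ∈ IsLocalRing.maximalIdeal V := by
    rw [← residue_eq_zero_iff, map_sub, hc]
    show ρ c - ρ c = 0
    ring
  refine ⟨((starRingEnd ℂ) c) ⊗ₜ[ℝ] 1 + (1 : ℂ) ⊗ₜ[ℝ] ⟨v - cToV c, mem_Asub_of_mem_mV hw⟩, ?_⟩
  simp [φ₂, Algebra.TensorProduct.productMap_apply_tmul, f2_apply, gA_apply, Complex.conj_conj]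

def pIdeal : Ideal (ℂ ⊗[ℝ] Asub) := RingHom.ker φ₁.toRingHom
def qIdeal : Ideal (ℂ ⊗[ℝ] Asub) := RingHom.ker φ₂.toRingHom
def MIdeal : Ideal (ℂ ⊗[ℝ] Asub) := RingHom.ker ((IsLocalRing.residue V).comp φ₁.toRingHom)

instance : pIdeal.IsPrime := RingHom.ker_isPrime _
instance : qIdeal.IsPrime := RingHom.ker_isPrime _

lemma M_max : MIdeal.IsMaximal :=
  RingHom.ker_isMaximal_of_surjective _ (Ideal.Quotient.mk_surjective.comp surj1)

lemma p_le_M : pIdeal ≤ MIdeal := by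
  intro x hx
  have h : φ₁ x = 0 := hx
  show IsLocalRing.residue V (φ₁ x) = 0
  rw [h, map_zero]

lemma q_le_M : qIdeal ≤ MIdeal := by
  intro x hx
  have h : φ₂ x = 0 := hx
  obtain ⟨z, hz1, hz2⟩ := key_res x
  rw [h, map_zero] at hz2
  have hz0 : z = 0 := by
    have := ρ_eq_zero_iff.mp hz2.symm
    simpa using this
  show IsLocalRing.residue V (φ₁ x) = 0
  rw [hz1, hz0, map_zero]

def a0 : Asub := ⟨cToV Complex.I * xV, mem_Asub_of_mem_mV (Ideal.mul_mem_left _ _ xV_mem)⟩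
def eP : ℂ ⊗[ℝ] Asub := (1 : ℂ) ⊗ₜ[ℝ] (-a0) + Complex.I ⊗ₜ[ℝ] xA
def eQ : ℂ ⊗[ℝ] Asub := (1 : ℂ) ⊗ₜ[ℝ] a0 + Complex.I ⊗ₜ[ℝ] xA

lemma cIxV_ne : cToV Complex.I * xV ≠ 0 :=
  mul_ne_zero (fun h => Complex.I_ne_zero (injcToV (by rw [map_zero]; exact h))) xV_ne

lemma eP_mem : eP ∈ pIdeal := by
  show φ₁ eP = 0
  rw [eP, φ₁_apply]
  push_cast
  show -(cToV Complex.I * xV) + cToV Complex.I * xV = 0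
  ring

lemma eP_not_mem : eP ∉ qIdeal := by
  intro h
  have h2 : φ₂ eP = 0 := h
  rw [eP, φ₂_apply] at h2
  push_cast at h2
  have h3 : -(cToV Complex.I * xV) - cToV Complex.I * xV = 0 := h2
  have h4 : (2 : V) * (cToV Complex.I * xV) = 0 := by linear_combination -h3
  rcases mul_eq_zero.mp h4 with h | h
  · exact two_ne_zero h
  · exact cIxV_ne h

lemma eQ_mem : eQ ∈ qIdeal := by
  show φ₂ eQ = 0
  rw [eQ, φ₂_apply]
  show cToV Complex.I * xV - cToV Complex.I * xV = 0
  ring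

lemma eQ_not_mem : eQ ∉ pIdeal := by
  intro h
  have h2 : φ₁ eQ = 0 := h
  rw [eQ, φ₁_apply] at h2
  have h3 : cToV Complex.I * xV + cToV Complex.I * xV = 0 := h2
  have h4 : (2 : V) * (cToV Complex.I * xV) = 0 := by linear_combination h3
  rcases mul_eq_zero.mp h4 with h | h
  · exact two_ne_zero h
  · exact cIxV_ne h

lemma p_ne_q : pIdeal ≠ qIdeal := fun h => eP_not_mem (h ▸ eP_mem)
lemma not_p_le_q : ¬ pIdeal ≤ qIdeal := fun h => eP_not_mem (h eP_mem)
lemma not_q_le_p : ¬ qIdeal ≤ pIdeal := fun h => eQ_not_mem (h eQ_mem)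

lemma inf_eq_bot : pIdeal ⊓ qIdeal = ⊥ := by
  refine le_antisymm (fun x hx => ?_) bot_le
  rw [Ideal.mem_bot]
  exact inj_pair x hx.1 hx.2

lemma mul_le_any {r : Ideal (ℂ ⊗[ℝ] Asub)} : pIdeal * qIdeal ≤ r :=
  le_trans Ideal.mul_le_inf (by rw [inf_eq_bot]; exact bot_le)

lemma p_min : pIdeal ∈ minimalPrimes (ℂ ⊗[ℝ] Asub) := by
  refine ⟨⟨inferInstance, bot_le⟩, ?_⟩
  rintro r ⟨hr, -⟩ hrle
  rcases (Ideal.IsPrime.mul_le hr).mp mul_le_any with h | h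
  · exact h
  · exact absurd (le_trans h hrle) not_q_le_p

lemma q_min : qIdeal ∈ minimalPrimes (ℂ ⊗[ℝ] Asub) := by
  refine ⟨⟨inferInstance, bot_le⟩, ?_⟩
  rintro r ⟨hr, -⟩ hrle
  rcases (Ideal.IsPrime.mul_le hr).mp mul_le_any with h | h
  · exact absurd (le_trans h hrle) not_p_le_q
  · exact h

lemma min_eq : minimalPrimes (ℂ ⊗[ℝ] Asub) = {pIdeal, qIdeal} := by
  ext r
  constructor
  · rintro ⟨⟨hrprime, -⟩, hmin⟩
    rcases (Ideal.IsPrime.mul_le hrprime).mp mul_le_any with h | h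
    · exact Or.inl (le_antisymm (hmin ⟨inferInstance, bot_le⟩ h) h)
    · exact Or.inr (le_antisymm (hmin ⟨inferInstance, bot_le⟩ h) h)
  · rintro (rfl | rfl)
    · exact p_min
    · exact q_min
/-- **Example 3.2.** `A = ℝ + X·ℂ[X]_(X)` is a local one-dimensional
domain (hence satisfies MPC), but `ℂ ⊗_ℝ A` fails MPC: it has exactly two minimal
primes and they are contained in a common maximal ideal. -/
theorem stmt7 :
    IsLocalRing Asub ∧ IsDomain Asub ∧ ringKrullDim Asub = 1 ∧ MPC Asub ∧
      ¬ MPC (ℂ ⊗[ℝ] Asub) ∧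
      ∃ p q : Ideal (ℂ ⊗[ℝ] Asub),
        minimalPrimes (ℂ ⊗[ℝ] Asub) = {p, q} ∧ p ≠ q ∧
          ∃ M : Ideal (ℂ ⊗[ℝ] Asub), M.IsMaximal ∧ p ≤ M ∧ q ≤ M := by
  refine ⟨inferInstance, inferInstance, dimA, mpcA, ?_,
    pIdeal, qIdeal, min_eq, p_ne_q, MIdeal, M_max, p_le_M, q_le_M⟩
  intro h
  have h1 := h pIdeal (by rw [min_eq]; exact Or.inl rfl) qIdeal
    (by rw [min_eq]; exact Or.inr rfl) p_ne_q
  have h2 : pIdeal ⊔ qIdeal ≤ MIdeal := sup_le p_le_M q_le_M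
  rw [h1] at h2
  exact M_max.ne_top (top_le_iff.mp h2)

end
end

section
/- Let k be an algebraically closed field and let A and B be k-algebras. Then A ⊗_k B satisfies MPC if and only if both A and B satisfy MPC. -/
open Polynomial TensorProduct

set_option maxHeartbeats 1000000
set_option synthInstance.maxHeartbeats 100000
set_option linter.unusedSectionVars false

section Stmt8Aux

variable {k : Type*} [Field k] [IsAlgClosed k]

private lemma core_lemma {D E : Type*} [CommRing D] [IsDomain D] [Algebra k D]
    [CommRing E] [IsDomain E] [Algebra k E] [Algebra.FiniteType k E]
    (x y : D ⊗[k] E) (hxy : x * y = 0) : x = 0 ∨ y = 0 := by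
  classical
  set b : Module.Basis (Module.Basis.ofVectorSpaceIndex k D) k D := Module.Basis.ofVectorSpace k D with hb
  set φ : D ⊗[k] E ≃ₗ[k] (Module.Basis.ofVectorSpaceIndex k D →₀ E) :=
    (TensorProduct.congr b.repr (LinearEquiv.refl k E)).trans
      (TensorProduct.finsuppScalarLeft k E _) with hφ
  have key : ∀ (ψ : E →ₐ[k] k) (z : D ⊗[k] E),
      ((Algebra.TensorProduct.rid k k D).toAlgHom.comp
        (Algebra.TensorProduct.map (AlgHom.id k D) ψ)) z =
      b.repr.symm (Finsupp.mapRange ψ (map_zero ψ) (φ z)) := by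
    intro ψ z
    induction z with
    | zero => simp
    | tmul d e =>
        have h1 : Finsupp.mapRange ψ (map_zero ψ) (φ (d ⊗ₜ[k] e)) = ψ e • b.repr d := by
          ext s
          simp only [hφ, LinearEquiv.trans_apply, TensorProduct.congr_tmul,
            LinearEquiv.refl_apply, TensorProduct.finsuppScalarLeft_apply_tmul_apply,
            Finsupp.mapRange_apply, Finsupp.smul_apply]
          rw [map_smul]
          simp [smul_eq_mul, mul_comm]
        rw [h1, map_smul]
        simp [Algebra.TensorProduct.rid_tmul]
    | add z w hz hw =>
        simp only [map_add, hz, hw]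
        rw [Finsupp.mapRange_add (by exact map_add ψ), map_add]
  -- the coordinate ideals
  set I : D ⊗[k] E → Ideal E := fun z => Ideal.span (Set.range fun s => φ z s) with hI
  haveI : IsJacobsonRing E := isJacobsonRing_of_finiteType (A := k)
  have hmem : ∀ m : Ideal E, m.IsMaximal → I x ≤ m ∨ I y ≤ m := by
    intro m hm
    letI : Field (E ⧸ m) := Ideal.Quotient.field m
    haveI : Algebra.FiniteType k (E ⧸ m) :=
      Algebra.FiniteType.of_surjective (Ideal.Quotient.mkₐ k m)
        (Ideal.Quotient.mkₐ_surjective k m)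
    haveI : Module.Finite k (E ⧸ m) := finite_of_finite_type_of_isJacobsonRing k _
    have hsurj : Function.Surjective (algebraMap k (E ⧸ m)) :=
      IsAlgClosed.algebraMap_bijective_of_isIntegral.2
    let e : k ≃ₐ[k] (E ⧸ m) :=
      AlgEquiv.ofBijective (Algebra.ofId k _) ⟨(algebraMap k _).injective, hsurj⟩
    set ψ : E →ₐ[k] k := (e.symm.toAlgHom).comp (Ideal.Quotient.mkₐ k m) with hψ
    have hker : ∀ t : E, ψ t = 0 ↔ t ∈ m := by
      intro t
      rw [hψ]
      simp only [AlgHom.comp_apply, AlgEquiv.toAlgHom_eq_coe, AlgHom.coe_coe, AlgEquiv.coe_toAlgHom,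
        Ideal.Quotient.mkₐ_eq_mk]
      rw [show (0 : k) = e.symm 0 by simp, e.symm.injective.eq_iff,
        Ideal.Quotient.eq_zero_iff_mem]
    set π : D ⊗[k] E →ₐ[k] D := ((Algebra.TensorProduct.rid k k D).toAlgHom.comp
        (Algebra.TensorProduct.map (AlgHom.id k D) ψ)) with hπ
    have hmul : π x * π y = 0 := by rw [← map_mul, hxy, map_zero]
    have main : ∀ z : D ⊗[k] E, π z = 0 → I z ≤ m := by
      intro z hz
      rw [hI]
      refine Ideal.span_le.mpr ?_
      rintro t ⟨s, rfl⟩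
      rw [hπ] at hz
      rw [key ψ z] at hz
      have h2 : Finsupp.mapRange ψ (map_zero ψ) (φ z) = 0 :=
        b.repr.symm.injective (by simpa using hz)
      have h3 := DFunLike.congr_fun h2 s
      rw [Finsupp.mapRange_apply] at h3
      exact (hker _).mp h3
    rcases mul_eq_zero.mp hmul with h | h
    · exact Or.inl (main x h)
    · exact Or.inr (main y h)
  have hjac : I x * I y ≤ (⊥ : Ideal E).jacobson := by
    rw [Ideal.jacobson]
    refine le_sInf ?_
    rintro J ⟨-, hJ⟩
    rcases hmem J hJ with h | h
    · exact le_trans Ideal.mul_le_left h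
    · exact le_trans Ideal.mul_le_right h
  have hbotjac : (⊥ : Ideal E).jacobson = ⊥ :=
    isJacobsonRing_iff_prime_eq.mp ‹IsJacobsonRing E› ⊥ Ideal.bot_prime
  have hbot : I x * I y = ⊥ := le_bot_iff.mp (hbotjac ▸ hjac)
  have hzero : ∀ z : D ⊗[k] E, I z = ⊥ → z = 0 := by
    intro z hz
    have h1 : ∀ s, φ z s = 0 := fun s => (Ideal.span_eq_bot.mp hz) _ ⟨s, rfl⟩
    have h2 : φ z = 0 := DFunLike.ext _ _ h1
    simpa using (map_eq_zero_iff φ φ.injective).mp h2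
  rcases Ideal.mul_eq_bot.mp hbot with h | h
  · exact Or.inl (hzero x h)
  · exact Or.inr (hzero y h)

private lemma tmul_one_eq_zero_iff {D E : Type*} [CommRing D] [Algebra k D]
    [CommRing E] [Algebra k E] [Nontrivial E] (d : D) :
    d ⊗ₜ[k] (1 : E) = 0 ↔ d = 0 := by
  have hinj : Function.Injective (LinearMap.lTensor D (Algebra.linearMap k E)) :=
    Module.Flat.lTensor_preserves_injective_linearMap _ (algebraMap k E).injective
  constructor
  · intro h
    have h2 : (LinearMap.lTensor D (Algebra.linearMap k E)) (d ⊗ₜ[k] (1:k)) =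
        (LinearMap.lTensor D (Algebra.linearMap k E)) 0 := by
      rw [LinearMap.lTensor_tmul, map_zero]
      simpa using h
    have h3 := hinj h2
    have := congrArg (TensorProduct.rid k D) h3
    simpa using this
  · rintro rfl; rw [zero_tmul]

private lemma one_tmul_eq_zero_iff {D E : Type*} [CommRing D] [Algebra k D]
    [CommRing E] [Algebra k E] [Nontrivial D] (e : E) :
    (1 : D) ⊗ₜ[k] e = 0 ↔ e = 0 := by
  have hinj : Function.Injective (LinearMap.rTensor E (Algebra.linearMap k D)) :=
    Module.Flat.rTensor_preserves_injective_linearMap _ (algebraMap k D).injective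
  constructor
  · intro h
    have h2 : (LinearMap.rTensor E (Algebra.linearMap k D)) ((1:k) ⊗ₜ[k] e) =
        (LinearMap.rTensor E (Algebra.linearMap k D)) 0 := by
      rw [LinearMap.rTensor_tmul, map_zero]
      simpa using h
    have h3 := hinj h2
    have := congrArg (TensorProduct.lid k E) h3
    simpa using this
  · rintro rfl; rw [tmul_zero]

private lemma tensorNontrivial (D E : Type*) [CommRing D] [Nontrivial D] [Algebra k D]
    [CommRing E] [Nontrivial E] [Algebra k E] : Nontrivial (D ⊗[k] E) := by
  refine ⟨(1:D) ⊗ₜ[k] (1:E), 0, fun h => ?_⟩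
  exact one_ne_zero ((tmul_one_eq_zero_iff (k:=k) (1:D)).mp h)

private lemma tensorDomain (D E : Type*) [CommRing D] [IsDomain D] [Algebra k D]
    [CommRing E] [IsDomain E] [Algebra k E] : IsDomain (D ⊗[k] E) := by
  classical
  have hnzd : ∀ x y : D ⊗[k] E, x * y = 0 → x = 0 ∨ y = 0 := by
    intro x y hxy
    obtain ⟨Sx, hSx⟩ := TensorProduct.exists_finset x
    obtain ⟨Sy, hSy⟩ := TensorProduct.exists_finset y
    set T : Finset E := (Sx ∪ Sy).image Prod.snd with hT
    set E' := Algebra.adjoin k (T : Set E) with hE'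
    haveI : Algebra.FiniteType k E' := (Subalgebra.fg_iff_finiteType _).mp
      (Subalgebra.fg_adjoin_finset T)
    set j : D ⊗[k] E' →ₐ[k] D ⊗[k] E :=
      Algebra.TensorProduct.map (AlgHom.id k D) E'.val with hj
    have hjl : ∀ a, j a = LinearMap.lTensor D (E'.val.toLinearMap) a := by
      intro a
      induction a with
      | zero => rw [map_zero, map_zero]
      | tmul d e => rw [LinearMap.lTensor_tmul]; simp [hj]
      | add a b ha hb => rw [map_add, map_add, ha, hb]
    have hinj : Function.Injective j := by
      intro a b hab
      have h1 : Function.Injective (E'.val.toLinearMap) := Subtype.val_injective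
      have := Module.Flat.lTensor_preserves_injective_linearMap (M := D)
        (E'.val.toLinearMap) h1
      apply this
      rw [← hjl, ← hjl, hab]
    have hmk : ∀ (S : Finset (D × E)), ↑S ⊆ (Sx ∪ Sy : Finset (D × E)) →
        ∃ z : D ⊗[k] E', j z = ∑ p ∈ S, p.1 ⊗ₜ[k] p.2 := by
      intro S hS
      have hmem : ∀ p ∈ S, p.2 ∈ E' := fun p hp =>
        Algebra.subset_adjoin (Finset.mem_coe.mpr (Finset.mem_image.mpr ⟨p, hS hp, rfl⟩))
      refine ⟨∑ p ∈ S.attach, p.1.1 ⊗ₜ[k] ⟨p.1.2, hmem p.1 p.2⟩, ?_⟩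
      rw [map_sum, ← Finset.sum_attach S (fun p => p.1 ⊗ₜ[k] p.2)]
      refine Finset.sum_congr rfl fun p _ => ?_
      simp [hj]
    obtain ⟨x', hx'⟩ := hmk Sx Finset.subset_union_left
    obtain ⟨y', hy'⟩ := hmk Sy Finset.subset_union_right
    rw [← hSx] at hx'
    rw [← hSy] at hy'
    have hxy' : x' * y' = 0 := by
      apply hinj
      rw [map_mul, hx', hy', hxy, map_zero]
    rcases core_lemma x' y' hxy' with h | h
    · left; rw [← hx', h, map_zero]
    · right; rw [← hy', h, map_zero]
  haveI : Nontrivial (D ⊗[k] E) := tensorNontrivial D E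
  haveI : NoZeroDivisors (D ⊗[k] E) := ⟨fun {a b} h => hnzd a b h⟩
  exact NoZeroDivisors.to_isDomain _

variable {A B : Type*} [CommRing A] [CommRing B] [Algebra k A] [Algebra k B]

/-- The kernel of `A ⊗ B → (A/p) ⊗ (B/q)`. -/
noncomputable def KK (k : Type*) [Field k] {A B : Type*} [CommRing A] [CommRing B]
    [Algebra k A] [Algebra k B] (p : Ideal A) (q : Ideal B) : Ideal (A ⊗[k] B) :=
  RingHom.ker (Algebra.TensorProduct.map (Ideal.Quotient.mkₐ k p) (Ideal.Quotient.mkₐ k q))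

lemma KK_eq (p : Ideal A) (q : Ideal B) :
    KK k p q = p.map (Algebra.TensorProduct.includeLeft : A →ₐ[k] A ⊗[k] B) ⊔
      q.map (Algebra.TensorProduct.includeRight : B →ₐ[k] A ⊗[k] B) := by
  have hk1 : RingHom.ker (Ideal.Quotient.mkₐ k p) = p := by
    ext a; simp [RingHom.mem_ker, Ideal.Quotient.eq_zero_iff_mem]
  have hk2 : RingHom.ker (Ideal.Quotient.mkₐ k q) = q := by
    ext b; simp [RingHom.mem_ker, Ideal.Quotient.eq_zero_iff_mem]
  rw [KK, Algebra.TensorProduct.map_ker _ _ (Ideal.Quotient.mkₐ_surjective k p)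
    (Ideal.Quotient.mkₐ_surjective k q), hk1, hk2]

lemma KK_prime (p : Ideal A) (q : Ideal B) [p.IsPrime] [q.IsPrime] :
    (KK k p q).IsPrime := by
  haveI := tensorDomain (k := k) (A ⧸ p) (B ⧸ q)
  exact RingHom.ker_isPrime _

lemma comap_KK_left (p : Ideal A) (q : Ideal B) [p.IsPrime] [q.IsPrime] :
    Ideal.comap (Algebra.TensorProduct.includeLeft : A →ₐ[k] A ⊗[k] B) (KK k p q) = p := by
  ext a
  simp only [Ideal.mem_comap, KK, RingHom.mem_ker, Algebra.TensorProduct.includeLeft_apply,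
    Algebra.TensorProduct.map_tmul, map_one, Ideal.Quotient.mkₐ_eq_mk]
  rw [tmul_one_eq_zero_iff (k := k), Ideal.Quotient.eq_zero_iff_mem]

lemma comap_KK_right (p : Ideal A) (q : Ideal B) [p.IsPrime] [q.IsPrime] :
    Ideal.comap (Algebra.TensorProduct.includeRight : B →ₐ[k] A ⊗[k] B) (KK k p q) = q := by
  ext b
  simp only [Ideal.mem_comap, KK, RingHom.mem_ker, Algebra.TensorProduct.includeRight_apply,
    Algebra.TensorProduct.map_tmul, map_one, Ideal.Quotient.mkₐ_eq_mk]
  rw [one_tmul_eq_zero_iff (k := k), Ideal.Quotient.eq_zero_iff_mem]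

lemma KK_le {p : Ideal A} {q : Ideal B} {P : Ideal (A ⊗[k] B)}
    (hp : p ≤ P.comap (Algebra.TensorProduct.includeLeft : A →ₐ[k] A ⊗[k] B))
    (hq : q ≤ P.comap (Algebra.TensorProduct.includeRight : B →ₐ[k] A ⊗[k] B)) :
    KK k p q ≤ P := by
  rw [KK_eq]
  exact sup_le (Ideal.map_le_iff_le_comap.mpr hp) (Ideal.map_le_iff_le_comap.mpr hq)

lemma KK_mono {p p' : Ideal A} {q q' : Ideal B} (hp : p ≤ p') (hq : q ≤ q') :
    KK k p q ≤ KK k p' q' := by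
  rw [KK_eq, KK_eq]
  exact sup_le_sup (Ideal.map_mono hp) (Ideal.map_mono hq)

lemma exists_KK_le {P : Ideal (A ⊗[k] B)} (hP : P.IsPrime) :
    ∃ p ∈ minimalPrimes A, ∃ q ∈ minimalPrimes B,
      p ≤ P.comap (Algebra.TensorProduct.includeLeft : A →ₐ[k] A ⊗[k] B) ∧
      q ≤ P.comap (Algebra.TensorProduct.includeRight : B →ₐ[k] A ⊗[k] B) ∧
      KK k p q ≤ P := by
  haveI := hP
  haveI : (P.comap (Algebra.TensorProduct.includeLeft : A →ₐ[k] A ⊗[k] B)).IsPrime :=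
    Ideal.IsPrime.comap _
  haveI : (P.comap (Algebra.TensorProduct.includeRight : B →ₐ[k] A ⊗[k] B)).IsPrime :=
    Ideal.IsPrime.comap _
  obtain ⟨p, hp, hple⟩ := Ideal.exists_minimalPrimes_le (I := (⊥ : Ideal A))
    (J := P.comap (Algebra.TensorProduct.includeLeft : A →ₐ[k] A ⊗[k] B)) bot_le
  obtain ⟨q, hq, hqle⟩ := Ideal.exists_minimalPrimes_le (I := (⊥ : Ideal B))
    (J := P.comap (Algebra.TensorProduct.includeRight : B →ₐ[k] A ⊗[k] B)) bot_le
  exact ⟨p, hp, q, hq, hple, hqle, KK_le hple hqle⟩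

lemma KK_mem_minimalPrimes {p : Ideal A} {q : Ideal B}
    (hp : p ∈ minimalPrimes A) (hq : q ∈ minimalPrimes B) :
    KK k p q ∈ minimalPrimes (A ⊗[k] B) := by
  haveI := hp.1.1
  haveI := hq.1.1
  refine ⟨⟨KK_prime p q, bot_le⟩, ?_⟩
  rintro Q ⟨hQ, -⟩ hQle
  obtain ⟨p₀, hp₀, q₀, hq₀, hp₀le, hq₀le, hle⟩ := exists_KK_le hQ
  have hp₀p : p₀ ≤ p := by
    refine le_trans hp₀le ?_
    rw [← comap_KK_left (k := k) p q]
    exact Ideal.comap_mono hQle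
  have hq₀q : q₀ ≤ q := by
    refine le_trans hq₀le ?_
    rw [← comap_KK_right (k := k) p q]
    exact Ideal.comap_mono hQle
  have hpp : p = p₀ := le_antisymm (hp.2 ⟨hp₀.1.1, bot_le⟩ hp₀p) hp₀p
  have hqq : q = q₀ := le_antisymm (hq.2 ⟨hq₀.1.1, bot_le⟩ hq₀q) hq₀q
  rw [hpp, hqq]
  exact hle

lemma mem_minimalPrimes_iff {P : Ideal (A ⊗[k] B)} :
    P ∈ minimalPrimes (A ⊗[k] B) ↔
      ∃ p ∈ minimalPrimes A, ∃ q ∈ minimalPrimes B, P = KK k p q := by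
  constructor
  · intro hP
    obtain ⟨p, hp, q, hq, -, -, hle⟩ := exists_KK_le hP.1.1
    haveI := hp.1.1
    haveI := hq.1.1
    exact ⟨p, hp, q, hq, le_antisymm (hP.2 ⟨KK_prime p q, bot_le⟩ hle) hle⟩
  · rintro ⟨p, hp, q, hq, rfl⟩
    exact KK_mem_minimalPrimes hp hq


end Stmt8Aux

/-- Over an algebraically closed field, `A ⊗ₖ B` satisfies MPC
iff both `A` and `B` do. -/
theorem stmt8 {k A B : Type*} [Field k] [IsAlgClosed k] [CommRing A] [CommRing B]
    [Nontrivial A] [Nontrivial B] [Algebra k A] [Algebra k B] :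
    MPC (A ⊗[k] B) ↔ MPC A ∧ MPC B := by
  constructor
  · intro h
    constructor
    · intro p hp p' hp' hne
      haveI := hp.1.1
      haveI := hp'.1.1
      obtain ⟨n, hn⟩ := Ideal.exists_maximal B
      haveI := hn.isPrime
      obtain ⟨q, hq, hqn⟩ := Ideal.exists_minimalPrimes_le (I := (⊥ : Ideal B)) (J := n) bot_le
      haveI := hq.1.1
      have h1 := KK_mem_minimalPrimes (k := k) hp hq
      have h2 := KK_mem_minimalPrimes (k := k) hp' hq
      have hne' : KK k p q ≠ KK k p' q := fun e => hne (by
        rw [← comap_KK_left (k := k) p q, e, comap_KK_left])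
      have htop := h _ h1 _ h2 hne'
      by_contra hcon
      obtain ⟨m, hm, hle⟩ := Ideal.exists_le_maximal _ hcon
      haveI := hm.isPrime
      have hKle : KK k p q ⊔ KK k p' q ≤ KK k m n :=
        sup_le (KK_mono (le_trans le_sup_left hle) hqn)
          (KK_mono (le_trans le_sup_right hle) hqn)
      rw [htop] at hKle
      exact (KK_prime (k := k) m n).ne_top (top_le_iff.mp hKle)
    · intro q hq q' hq' hne
      haveI := hq.1.1
      haveI := hq'.1.1
      obtain ⟨n, hn⟩ := Ideal.exists_maximal A
      haveI := hn.isPrime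
      obtain ⟨p, hp, hpn⟩ := Ideal.exists_minimalPrimes_le (I := (⊥ : Ideal A)) (J := n) bot_le
      haveI := hp.1.1
      have h1 := KK_mem_minimalPrimes (k := k) hp hq
      have h2 := KK_mem_minimalPrimes (k := k) hp hq'
      have hne' : KK k p q ≠ KK k p q' := fun e => hne (by
        rw [← comap_KK_right (k := k) p q, e, comap_KK_right])
      have htop := h _ h1 _ h2 hne'
      by_contra hcon
      obtain ⟨m, hm, hle⟩ := Ideal.exists_le_maximal _ hcon
      haveI := hm.isPrime
      have hKle : KK k p q ⊔ KK k p q' ≤ KK k n m :=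
        sup_le (KK_mono hpn (le_trans le_sup_left hle))
          (KK_mono hpn (le_trans le_sup_right hle))
      rw [htop] at hKle
      exact (KK_prime (k := k) n m).ne_top (top_le_iff.mp hKle)
  · rintro ⟨hA, hB⟩ P hP P' hP' hne
    obtain ⟨p, hp, q, hq, rfl⟩ := mem_minimalPrimes_iff.mp hP
    obtain ⟨p', hp', q', hq', rfl⟩ := mem_minimalPrimes_iff.mp hP'
    haveI := hp.1.1
    haveI := hq.1.1
    haveI := hp'.1.1
    haveI := hq'.1.1
    by_contra hcon
    obtain ⟨M, hM, hle⟩ := Ideal.exists_le_maximal _ hcon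
    haveI := hM.isPrime
    haveI : (M.comap (Algebra.TensorProduct.includeLeft : A →ₐ[k] A ⊗[k] B)).IsPrime :=
      Ideal.IsPrime.comap _
    haveI : (M.comap (Algebra.TensorProduct.includeRight : B →ₐ[k] A ⊗[k] B)).IsPrime :=
      Ideal.IsPrime.comap _
    have hpp : p = p' := by
      by_contra hne2
      have htop := hA p hp p' hp' hne2
      have h1 : p ≤ M.comap (Algebra.TensorProduct.includeLeft : A →ₐ[k] A ⊗[k] B) := by
        rw [← comap_KK_left (k := k) p q]
        exact Ideal.comap_mono (le_trans le_sup_left hle)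
      have h2 : p' ≤ M.comap (Algebra.TensorProduct.includeLeft : A →ₐ[k] A ⊗[k] B) := by
        rw [← comap_KK_left (k := k) p' q']
        exact Ideal.comap_mono (le_trans le_sup_right hle)
      exact (Ideal.IsPrime.ne_top ‹_›) (top_le_iff.mp (htop ▸ sup_le h1 h2))
    have hqq : q = q' := by
      by_contra hne2
      have htop := hB q hq q' hq' hne2
      have h1 : q ≤ M.comap (Algebra.TensorProduct.includeRight : B →ₐ[k] A ⊗[k] B) := by
        rw [← comap_KK_right (k := k) p q]
        exact Ideal.comap_mono (le_trans le_sup_left hle)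
      have h2 : q' ≤ M.comap (Algebra.TensorProduct.includeRight : B →ₐ[k] A ⊗[k] B) := by
        rw [← comap_KK_right (k := k) p' q']
        exact Ideal.comap_mono (le_trans le_sup_right hle)
      exact (Ideal.IsPrime.ne_top ‹_›) (top_le_iff.mp (htop ▸ sup_le h1 h2))
    exact hne (by rw [hpp, hqq])
end

section
/- Let A be an algebra over a field k and let K be a purely inseparable field extension of k. Then K ⊗_k A satisfies MPC if and only if A satisfies MPC. -/
open Polynomial TensorProduct

section Aux

set_option linter.unusedSectionVars false

variable {k K A : Type*} [Field k] [Field K] [Algebra k K]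
    [IsPurelyInseparable k K] [CommRing A] [Nontrivial A] [Algebra k A]

noncomputable local instance : Algebra A (K ⊗[k] A) := Algebra.TensorProduct.rightAlgebra

lemma aux_q_pos : 0 < ringExpChar k := expChar_pos k (ringExpChar k)

lemma aux_expChar : ExpChar (K ⊗[k] A) (ringExpChar k) :=
  expChar_of_injective_ringHom (algebraMap k (K ⊗[k] A)).injective _

lemma aux_pow_mem (b : K ⊗[k] A) :
    ∃ n : ℕ, b ^ (ringExpChar k) ^ n ∈ (algebraMap A (K ⊗[k] A)).range := by
  have hE := aux_expChar (k := k) (K := K) (A := A)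
  set q := ringExpChar k with hq
  have hq0 : 0 < q := aux_q_pos (k := k)
  induction b using TensorProduct.induction_on with
  | zero =>
      exact ⟨1, ⟨0, by rw [map_zero, zero_pow (pow_ne_zero _ hq0.ne')]⟩⟩
  | tmul x a =>
      obtain ⟨n, y, hy⟩ := (isPurelyInseparable_iff_pow_mem k q).1 inferInstance x
      refine ⟨n, y • a ^ q ^ n, ?_⟩
      show (1 : K) ⊗ₜ[k] (y • a ^ q ^ n) = (x ⊗ₜ[k] a) ^ q ^ n
      rw [Algebra.TensorProduct.tmul_pow, ← hy, TensorProduct.tmul_smul,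
        TensorProduct.smul_tmul', Algebra.smul_def, mul_one]
  | add x y hx hy =>
      obtain ⟨n, c, hc⟩ := hx
      obtain ⟨m, d, hd⟩ := hy
      refine ⟨max n m, c ^ q ^ (max n m - n) + d ^ q ^ (max n m - m), ?_⟩
      have hxx : x ^ q ^ max n m = algebraMap A (K ⊗[k] A) (c ^ q ^ (max n m - n)) := by
        rw [map_pow, hc, ← pow_mul, ← pow_add]
        congr 2
        omega
      have hyy : y ^ q ^ max n m = algebraMap A (K ⊗[k] A) (d ^ q ^ (max n m - m)) := by
        rw [map_pow, hd, ← pow_mul, ← pow_add]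
        congr 2
        omega
      rw [map_add, add_pow_expChar_pow, hxx, hyy]

lemma aux_le_of_comap_le {P Q : Ideal (K ⊗[k] A)} [Q.IsPrime]
    (h : P.comap (algebraMap A (K ⊗[k] A)) ≤ Q.comap (algebraMap A (K ⊗[k] A))) : P ≤ Q := by
  intro b hb
  obtain ⟨n, a, ha⟩ := aux_pow_mem (k := k) b
  have hqn : 0 < (ringExpChar k) ^ n := pow_pos (aux_q_pos (k := k)) n
  have h1 : b ^ (ringExpChar k) ^ n ∈ P := P.pow_mem_of_mem hb _ hqn
  rw [← ha] at h1
  have h2 : a ∈ Q.comap (algebraMap A (K ⊗[k] A)) := h h1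
  have h3 : b ^ (ringExpChar k) ^ n ∈ Q := by rw [← ha]; exact h2
  exact ‹Q.IsPrime›.mem_of_pow_mem _ h3

lemma aux_isIntegral : Algebra.IsIntegral A (K ⊗[k] A) := by
  refine ⟨fun b => ?_⟩
  obtain ⟨n, a, ha⟩ := aux_pow_mem (k := k) b
  have hqn : (ringExpChar k) ^ n ≠ 0 := (pow_pos (aux_q_pos (k := k)) n).ne'
  exact ⟨X ^ (ringExpChar k) ^ n - C a, monic_X_pow_sub_C a hqn, by
    simp [Polynomial.eval₂_sub, ha]⟩

lemma aux_injective : Function.Injective (algebraMap A (K ⊗[k] A)) := by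
  obtain ⟨g, hg⟩ := (Algebra.linearMap k K).exists_leftInverse_of_injective
    (LinearMap.ker_eq_bot.2 (algebraMap k K).injective)
  have hg1 : g 1 = 1 := by
    have := LinearMap.congr_fun hg 1
    simpa using this
  intro a b hab
  have : (TensorProduct.lid k A) ((TensorProduct.map g LinearMap.id)
      ((1 : K) ⊗ₜ[k] a)) = (TensorProduct.lid k A) ((TensorProduct.map g LinearMap.id)
      ((1 : K) ⊗ₜ[k] b)) := by
    rw [show (1 : K) ⊗ₜ[k] a = algebraMap A (K ⊗[k] A) a from rfl,
        show (1 : K) ⊗ₜ[k] b = algebraMap A (K ⊗[k] A) b from rfl, hab]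
  simpa [hg1] using this

end Aux

/-- For a purely inseparable field extension `K/k`, the ring
`K ⊗ₖ A` satisfies MPC iff `A` does. -/
theorem stmt10 {k K A : Type*} [Field k] [Field K] [Algebra k K]
    [IsPurelyInseparable k K] [CommRing A] [Nontrivial A] [Algebra k A] :
    MPC (K ⊗[k] A) ↔ MPC A := by
  letI : Algebra A (K ⊗[k] A) := Algebra.TensorProduct.rightAlgebra
  haveI hint : Algebra.IsIntegral A (K ⊗[k] A) := aux_isIntegral
  set f := algebraMap A (K ⊗[k] A) with hf
  have hker : RingHom.ker f = ⊥ :=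
    (RingHom.injective_iff_ker_eq_bot f).1 (aux_injective (k := k))
  have hcomap_bot : (⊥ : Ideal (K ⊗[k] A)).comap f ≤ nilradical A ⊔ ⊥ := by
    exact le_sup_of_le_right (le_of_eq hker)
  constructor
  · intro hB p hp q hq hpq
    haveI hpP : p.IsPrime := hp.1.1
    haveI hqP : q.IsPrime := hq.1.1
    -- lying over: find minimal primes of K ⊗ A over p and q
    have lift : ∀ (r : Ideal A), r ∈ minimalPrimes A → r.IsPrime →
        ∃ R ∈ minimalPrimes (K ⊗[k] A), R.comap f = r := by
      intro r hr hrP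
      obtain ⟨R, -, hRp, hRc⟩ := Ideal.exists_ideal_over_prime_of_isIntegral r ⊥
        (le_trans (le_of_eq hker) bot_le)
      haveI := hRp
      obtain ⟨R₀, hR₀, hR₀le⟩ := Ideal.exists_minimalPrimes_le (bot_le (a := R))
      haveI hR₀p : R₀.IsPrime := hR₀.1.1
      have hle : R₀.comap f ≤ r := hRc ▸ Ideal.comap_mono hR₀le
      exact ⟨R₀, hR₀, le_antisymm hle (hr.2 ⟨Ideal.IsPrime.comap f, bot_le⟩ hle)⟩
    obtain ⟨P, hP, hPc⟩ := lift p hp hpP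
    obtain ⟨Q, hQ, hQc⟩ := lift q hq hqP
    have hne : P ≠ Q := fun h => hpq (by rw [← hPc, ← hQc, h])
    have htop := hB P hP Q hQ hne
    by_contra hpqtop
    obtain ⟨m, hm, hmle⟩ := Ideal.exists_le_maximal _ hpqtop
    haveI := hm.isPrime
    obtain ⟨M, hMge, hMp, hMc⟩ := Ideal.exists_ideal_over_prime_of_isIntegral m P
      (by rw [hPc]; exact le_trans le_sup_left hmle)
    obtain ⟨M', hM'ge, hM'p, hM'c⟩ := Ideal.exists_ideal_over_prime_of_isIntegral m Q
      (by rw [hQc]; exact le_trans le_sup_right hmle)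
    haveI := hMp; haveI := hM'p
    have hMM' : M' = M := le_antisymm (aux_le_of_comap_le (by rw [hMc, hM'c]))
      (aux_le_of_comap_le (by rw [hMc, hM'c]))
    have : (⊤ : Ideal (K ⊗[k] A)) ≤ M := by
      rw [← htop]; exact sup_le hMge (hMM' ▸ hM'ge)
    exact hMp.ne_top (top_le_iff.1 this)
  · intro hA P hP Q hQ hPQ
    haveI hPp : P.IsPrime := hP.1.1
    haveI hQp : Q.IsPrime := hQ.1.1
    have key : ∀ (R : Ideal (K ⊗[k] A)), R ∈ minimalPrimes (K ⊗[k] A) → R.IsPrime →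
        R.comap f ∈ minimalPrimes A := by
      intro R hR hRP
      obtain ⟨p', hp', hp'le⟩ := Ideal.exists_minimalPrimes_le (bot_le (a := R.comap f))
      haveI hp'P : p'.IsPrime := hp'.1.1
      obtain ⟨Q', -, hQ'p, hQ'c⟩ := Ideal.exists_ideal_over_prime_of_isIntegral p' ⊥
        (le_trans (le_of_eq hker) bot_le)
      haveI := hQ'p
      have hQ'le : Q' ≤ R := aux_le_of_comap_le (by rw [hQ'c]; exact hp'le)
      have hReq : R = Q' := le_antisymm (hR.2 ⟨hQ'p, bot_le⟩ hQ'le) hQ'le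
      rw [hReq, hQ'c]
      exact hp'
    have hp := key P hP hPp
    have hq := key Q hQ hQp
    have hne : P.comap f ≠ Q.comap f := by
      intro h
      exact hPQ (le_antisymm (aux_le_of_comap_le (le_of_eq h))
        (aux_le_of_comap_le (le_of_eq h.symm)))
    have htop := hA _ hp _ hq hne
    rw [eq_top_iff]
    calc (⊤ : Ideal (K ⊗[k] A)) = Ideal.map f ⊤ := (Ideal.map_top f).symm
      _ = Ideal.map f (P.comap f ⊔ Q.comap f) := by rw [htop]
      _ = Ideal.map f (P.comap f) ⊔ Ideal.map f (Q.comap f) := Ideal.map_sup f _ _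
      _ ≤ P ⊔ Q := sup_le_sup (Ideal.map_le_iff_le_comap.2 le_rfl)
          (Ideal.map_le_iff_le_comap.2 le_rfl)
end

section
/- Let A be a k-algebra and K a purely inseparable field extension of k. Then K ⊗_k A is a strong S-ring (respectively, catenarian) if and only if A is a strong S-ring (respectively, catenarian). -/
open Polynomial TensorProduct

section RadAux

open Polynomial

variable {q : ℕ}

/-- Characteristic-like condition on a ring: `q = 1` or `q` is a prime vanishing in `R`. -/
def QGood (q : ℕ) (R : Type*) [CommRing R] : Prop :=
  q = 1 ∨ (q.Prime ∧ (q : R) = 0)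

lemma QGood.pos {R : Type*} [CommRing R] (h : QGood q R) : 0 < q := by
  rcases h with h | ⟨hp, _⟩
  · omega
  · exact hp.pos

lemma QGood.frob_add {R : Type*} [CommRing R] (h : QGood q R) (x y : R) (n : ℕ) :
    (x + y) ^ q ^ n = x ^ q ^ n + y ^ q ^ n := by
  rcases h with h | ⟨hp, hq0⟩
  · simp [h]
  rcases subsingleton_or_nontrivial R with hR | hR
  · exact Subsingleton.elim _ _
  have hdvd : ringChar R ∣ q := ringChar.dvd hq0
  have hr : ringChar R = q := by
    rcases hp.eq_one_or_self_of_dvd _ hdvd with h1 | h1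
    · exact absurd h1 (CharP.char_ne_one R _)
    · exact h1
  haveI : CharP R q := ringChar.of_eq hr
  haveI : ExpChar R q := ExpChar.prime hp
  exact add_pow_expChar_pow x y q n

lemma QGood.map {R S : Type*} [CommRing R] [CommRing S] (h : QGood q R) (g : R →+* S) :
    QGood q S := by
  rcases h with h | ⟨hp, hq0⟩
  · exact Or.inl h
  · exact Or.inr ⟨hp, by rw [← map_natCast g, hq0, map_zero]⟩

/-- Radiciel-style ring hom: injective and every element has a `q ^ n`-th power in the range. -/
def RadHom (q : ℕ) {R S : Type*} [CommRing R] [CommRing S] (f : R →+* S) : Prop :=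
  Function.Injective f ∧ QGood q S ∧ ∀ x : S, ∃ n : ℕ, x ^ q ^ n ∈ f.range

namespace RadHom

variable {R S : Type*} [CommRing R] [CommRing S] {f : R →+* S}

lemma add_pow_mem (hS : QGood q S) {x y : S}
    (hx : ∃ n : ℕ, x ^ q ^ n ∈ f.range) (hy : ∃ n : ℕ, y ^ q ^ n ∈ f.range) :
    ∃ n : ℕ, (x + y) ^ q ^ n ∈ f.range := by
  obtain ⟨n, a, ha⟩ := hx
  obtain ⟨m, b, hb⟩ := hy
  refine ⟨n + m, ?_⟩
  rw [hS.frob_add]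
  have h1 : x ^ q ^ (n + m) = f (a ^ q ^ m) := by
    rw [map_pow, ha, ← pow_mul, ← pow_add]
  have h2 : y ^ q ^ (n + m) = f (b ^ q ^ n) := by
    rw [map_pow, hb, ← pow_mul, ← pow_add, Nat.add_comm m n]
  rw [h1, h2, ← map_add]
  exact ⟨_, rfl⟩

lemma comap_le_comap (h : RadHom q f) {P Q : Ideal S} (hQ : Q.IsPrime)
    (hle : P.comap f ≤ Q.comap f) : P ≤ Q := by
  intro x hx
  obtain ⟨n, b, hb⟩ := h.2.2 x
  have hbP : b ∈ P.comap f := by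
    rw [Ideal.mem_comap, hb]
    exact P.pow_mem_of_mem hx _ (pow_pos h.2.1.pos n)
  have : x ^ q ^ n ∈ Q := by rw [← hb]; exact hle hbP
  exact hQ.mem_of_pow_mem _ this

lemma isIntegral (h : RadHom q f) : letI : Algebra R S := f.toAlgebra
    Algebra.IsIntegral R S := by
  letI : Algebra R S := f.toAlgebra
  refine ⟨fun x => ?_⟩
  obtain ⟨n, b, hb⟩ := h.2.2 x
  refine ⟨X ^ q ^ n - Polynomial.C b, monic_X_pow_sub_C b (pow_pos h.2.1.pos n).ne', ?_⟩
  have : (algebraMap R S) b = x ^ q ^ n := hb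
  simp [this]

lemma comap_surjective (h : RadHom q f) :
    Function.Surjective (fun P : PrimeSpectrum S =>
      (⟨P.asIdeal.comap f, Ideal.IsPrime.comap f⟩ : PrimeSpectrum R)) := by
  intro p
  letI : Algebra R S := f.toAlgebra
  haveI : Algebra.IsIntegral R S := h.isIntegral
  have hker : Ideal.comap (algebraMap R S) (⊥ : Ideal S) ≤ p.asIdeal := by
    have : RingHom.ker f = ⊥ := (RingHom.injective_iff_ker_eq_bot f).mp h.1
    show RingHom.ker f ≤ p.asIdeal
    rw [this]; exact bot_le
  obtain ⟨Q, -, hQ, hQc⟩ := Ideal.exists_ideal_over_prime_of_isIntegral p.asIdeal ⊥ hker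
  exact ⟨⟨Q, hQ⟩, PrimeSpectrum.ext hQc⟩

/-- The order isomorphism of prime spectra induced by a `RadHom`. -/
noncomputable def specIso (h : RadHom q f) : PrimeSpectrum S ≃o PrimeSpectrum R where
  toEquiv := Equiv.ofBijective (fun P : PrimeSpectrum S =>
    (⟨P.asIdeal.comap f, Ideal.IsPrime.comap f⟩ : PrimeSpectrum R))
    ⟨fun P Q hPQ => by
      have hPQ' : P.asIdeal.comap f = Q.asIdeal.comap f := congrArg PrimeSpectrum.asIdeal hPQ
      exact PrimeSpectrum.ext (le_antisymm (h.comap_le_comap Q.isPrime hPQ'.le)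
        (h.comap_le_comap P.isPrime hPQ'.ge)), h.comap_surjective⟩
  map_rel_iff' := by
    intro P Q
    constructor
    · intro hle
      exact (PrimeSpectrum.asIdeal_le_asIdeal _ _).mp
        (h.comap_le_comap Q.isPrime ((PrimeSpectrum.asIdeal_le_asIdeal _ _).mpr hle))
    · intro hle
      exact (PrimeSpectrum.asIdeal_le_asIdeal _ _).mp
        (Ideal.comap_mono ((PrimeSpectrum.asIdeal_le_asIdeal _ _).mpr hle))

lemma specIso_apply (h : RadHom q f) (P : PrimeSpectrum S) :
    (h.specIso P).asIdeal = P.asIdeal.comap f := rfl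

lemma polynomial (h : RadHom q f) : RadHom q (Polynomial.mapRingHom f) := by
  have hQX : QGood q S[X] := h.2.1.map (Polynomial.C : S →+* S[X])
  refine ⟨Polynomial.map_injective f h.1, hQX, fun g => ?_⟩
  induction g using Polynomial.induction_on' with
  | add p r hp hr => exact add_pow_mem hQX hp hr
  | monomial n a =>
    obtain ⟨m, b, hb⟩ := h.2.2 a
    refine ⟨m, Polynomial.monomial (n * q ^ m) b, ?_⟩
    show Polynomial.map f (Polynomial.monomial (n * q ^ m) b) = _
    rw [Polynomial.map_monomial, hb, Polynomial.monomial_pow]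

lemma quotient (h : RadHom q f) (P : Ideal S) :
    RadHom q (Ideal.quotientMap P f le_rfl) := by
  refine ⟨Ideal.quotientMap_injective, h.2.1.map (Ideal.Quotient.mk P), fun x => ?_⟩
  obtain ⟨y, rfl⟩ := Ideal.Quotient.mk_surjective x
  obtain ⟨n, b, hb⟩ := h.2.2 y
  exact ⟨n, Ideal.Quotient.mk _ b, by rw [Ideal.quotientMap_mk, hb, map_pow]⟩

end RadHom

lemma comap_map_C {R S : Type*} [CommRing R] [CommRing S] (f : R →+* S) (I : Ideal S) :
    Ideal.comap (Polynomial.mapRingHom f) (Ideal.map (Polynomial.C : S →+* S[X]) I) =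
      Ideal.map (Polynomial.C : R →+* R[X]) (I.comap f) := by
  ext g
  simp only [Ideal.mem_comap, Ideal.mem_map_C_iff, Polynomial.coe_mapRingHom,
    Polynomial.coeff_map]

end RadAux

section Transfer

open Polynomial

variable {q : ℕ} {R S : Type*} [CommRing R] [CommRing S]

lemma mem_minimalPrimes_iff' (p : Ideal R) :
    p ∈ minimalPrimes R ↔ p.IsPrime ∧ ∀ r : Ideal R, r.IsPrime → r ≤ p → p ≤ r := by
  constructor
  · rintro ⟨⟨h1, -⟩, h2⟩
    exact ⟨h1, fun r hr hrp => h2 ⟨hr, bot_le⟩ hrp⟩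
  · rintro ⟨h1, h2⟩
    exact ⟨⟨h1, bot_le⟩, fun r hr hrp => h2 r hr.1 hrp⟩

lemma sup_eq_top_iff_no_prime (p q : Ideal R) :
    p ⊔ q = ⊤ ↔ ¬ ∃ r : PrimeSpectrum R, p ≤ r.asIdeal ∧ q ≤ r.asIdeal := by
  constructor
  · rintro h ⟨r, h1, h2⟩
    exact r.isPrime.ne_top (top_le_iff.mp (h ▸ sup_le h1 h2))
  · intro h
    by_contra hne
    obtain ⟨m, hm, hle⟩ := Ideal.exists_le_maximal _ hne
    exact h ⟨⟨m, hm.isPrime⟩, le_trans le_sup_left hle, le_trans le_sup_right hle⟩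

lemma mpc_of_orderIso (e : PrimeSpectrum S ≃o PrimeSpectrum R) (h : MPC S) : MPC R := by
  intro p hp q hq hpq
  obtain ⟨hp1, hp2⟩ := (mem_minimalPrimes_iff' p).mp hp
  obtain ⟨hq1, hq2⟩ := (mem_minimalPrimes_iff' q).mp hq
  set P : PrimeSpectrum S := e.symm ⟨p, hp1⟩ with hP
  set Q : PrimeSpectrum S := e.symm ⟨q, hq1⟩ with hQ
  have hmin : ∀ (x : Ideal R) (hx1 : x.IsPrime),
      (∀ r : Ideal R, r.IsPrime → r ≤ x → x ≤ r) →
      (e.symm ⟨x, hx1⟩).asIdeal ∈ minimalPrimes S := by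
    intro x hx1 hx2
    rw [mem_minimalPrimes_iff']
    refine ⟨(e.symm ⟨x, hx1⟩).isPrime, fun r hr hrx => ?_⟩
    have h1 : (⟨r, hr⟩ : PrimeSpectrum S) ≤ e.symm ⟨x, hx1⟩ :=
      (PrimeSpectrum.asIdeal_le_asIdeal _ _).mp hrx
    have h2 : e ⟨r, hr⟩ ≤ ⟨x, hx1⟩ := by
      have := e.monotone h1
      rwa [e.apply_symm_apply] at this
    have h3 : x ≤ (e ⟨r, hr⟩).asIdeal :=
      hx2 _ (e ⟨r, hr⟩).isPrime ((PrimeSpectrum.asIdeal_le_asIdeal _ _).mpr h2)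
    have h4 : e ⟨r, hr⟩ = ⟨x, hx1⟩ :=
      le_antisymm h2 ((PrimeSpectrum.asIdeal_le_asIdeal _ _).mp h3)
    have h5 : (⟨r, hr⟩ : PrimeSpectrum S) = e.symm ⟨x, hx1⟩ := by
      rw [← h4, e.symm_apply_apply]
    exact le_of_eq (congrArg PrimeSpectrum.asIdeal h5.symm)
  have hPQ : P.asIdeal ≠ Q.asIdeal := by
    intro hcon
    apply hpq
    have : P = Q := PrimeSpectrum.ext hcon
    have := e.symm.injective this
    exact congrArg PrimeSpectrum.asIdeal this
  have hsup := h P.asIdeal (hmin p hp1 hp2) Q.asIdeal (hmin q hq1 hq2) hPQ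
  rw [sup_eq_top_iff_no_prime] at hsup ⊢
  rintro ⟨r, h1, h2⟩
  refine hsup ⟨e.symm r, ?_, ?_⟩
  · exact (PrimeSpectrum.asIdeal_le_asIdeal _ _).mpr
      (e.symm.monotone ((PrimeSpectrum.asIdeal_le_asIdeal _ _).mp h1))
  · exact (PrimeSpectrum.asIdeal_le_asIdeal _ _).mpr
      (e.symm.monotone ((PrimeSpectrum.asIdeal_le_asIdeal _ _).mp h2))

lemma catenarian_of_orderIso (e : PrimeSpectrum S ≃o PrimeSpectrum R) (h : Catenarian S) :
    Catenarian R := by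
  obtain ⟨h1, h2, h3⟩ := h
  refine ⟨mpc_of_orderIso e h1, fun p => ?_, fun P Q hPQ => ?_⟩
  · have := h2 (e.symm p)
    rwa [Order.height_orderIso e.symm p] at this
  · have hc : e.symm P ⋖ e.symm Q := (apply_covBy_apply_iff e.symm).mpr hPQ
    have := h3 _ _ hc
    rwa [Order.height_orderIso e.symm P, Order.height_orderIso e.symm Q] at this

lemma RadHom.isSDomain_iff [IsDomain R] [IsDomain S] {f : R →+* S} (h : RadHom q f) :
    IsSDomain S ↔ IsSDomain R := by
  have hX := h.polynomial
  constructor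
  · intro hS p hp P hP
    obtain ⟨p', hp'⟩ := h.specIso.surjective p
    have hp'h : Order.height p' = 1 := by
      rw [← Order.height_orderIso h.specIso p', hp', hp]
    set P' : PrimeSpectrum S[X] :=
      ⟨Ideal.map (Polynomial.C : S →+* S[X]) p'.asIdeal,
        (by haveI := p'.isPrime; exact Ideal.isPrime_map_C_of_isPrime)⟩ with hP'def
    have hP'h : Order.height P' = 1 := hS p' hp'h P' rfl
    have key : hX.specIso P' = P := by
      apply PrimeSpectrum.ext
      rw [hX.specIso_apply]
      show Ideal.comap (Polynomial.mapRingHom f)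
        (Ideal.map (Polynomial.C : S →+* S[X]) p'.asIdeal) = P.asIdeal
      rw [comap_map_C, hP]
      congr 1
      exact congrArg PrimeSpectrum.asIdeal hp'
    rw [← key, Order.height_orderIso hX.specIso P', hP'h]
  · intro hR p' hp' P' hP'
    set p : PrimeSpectrum R := h.specIso p' with hpdef
    have hph : Order.height p = 1 := by
      rw [hpdef, Order.height_orderIso h.specIso p', hp']
    have key : (hX.specIso P').asIdeal =
        Ideal.map (Polynomial.C : R →+* R[X]) p.asIdeal := by
      rw [hX.specIso_apply, hP', comap_map_C, hpdef, h.specIso_apply]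
    have := hR p hph (hX.specIso P') key
    rwa [Order.height_orderIso hX.specIso P'] at this

lemma isSDomain_congr {R : Type*} [CommRing R] {I J : Ideal R} (h : I = J)
    [I.IsPrime] [J.IsPrime] : IsSDomain (R ⧸ I) → IsSDomain (R ⧸ J) := by
  subst h
  exact id

lemma RadHom.strongSRing_iff {f : R →+* S} (h : RadHom q f) :
    StrongSRing S ↔ StrongSRing R := by
  constructor
  · intro hS p
    obtain ⟨P, hP⟩ := h.specIso.surjective p
    have hcomap : P.asIdeal.comap f = p.asIdeal := congrArg PrimeSpectrum.asIdeal hP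
    have hq := h.quotient P.asIdeal
    exact isSDomain_congr hcomap (hq.isSDomain_iff.mp (hS P))
  · intro hR P
    exact (h.quotient P.asIdeal).isSDomain_iff.mpr (hR (h.specIso P))

end Transfer

/-- For a purely inseparable field extension `K/k`, the ring
`K ⊗ₖ A` is a strong S-ring (resp. catenarian) iff `A` is. -/
theorem stmt16 {k K A : Type*} [Field k] [Field K] [Algebra k K]
    [IsPurelyInseparable k K] [CommRing A] [Nontrivial A] [Algebra k A] :
    (StrongSRing (K ⊗[k] A) ↔ StrongSRing A) ∧
    (Catenarian (K ⊗[k] A) ↔ Catenarian A) := by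
  obtain ⟨q, hq⟩ : ∃ q, ExpChar k q := ⟨ringExpChar k, ringExpChar.expChar k⟩
  set f := (Algebra.TensorProduct.includeRight : A →ₐ[k] K ⊗[k] A).toRingHom with hfdef
  have hQ : QGood q (K ⊗[k] A) := by
    cases hq with
    | zero => exact Or.inl rfl
    | prime hp =>
      exact Or.inr ⟨hp, by
        rw [← map_natCast (algebraMap k (K ⊗[k] A)) q, CharP.cast_eq_zero k q, map_zero]⟩
  have hinj : Function.Injective f := by
    have h1 : Function.Injective ((Algebra.linearMap k K).rTensor A) :=
      Module.Flat.rTensor_preserves_injective_linearMap (M := A)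
        (Algebra.linearMap k K) (algebraMap k K).injective
    intro x y hxy
    have hx : ∀ a : A, (Algebra.linearMap k K).rTensor A ((TensorProduct.lid k A).symm a)
        = f a := by
      intro a
      simp [TensorProduct.lid_symm_apply, LinearMap.rTensor_tmul, hfdef,
        Algebra.linearMap_apply, Algebra.TensorProduct.includeRight_apply]
    have h2 : (TensorProduct.lid k A).symm x = (TensorProduct.lid k A).symm y :=
      h1 (by rw [hx x, hx y, hxy])
    exact (TensorProduct.lid k A).symm.injective h2
  have hpow : ∀ x : K ⊗[k] A, ∃ n : ℕ, x ^ q ^ n ∈ f.range := by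
    intro x
    induction x using TensorProduct.induction_on with
    | zero => exact ⟨0, 0, by simp⟩
    | tmul a b =>
      obtain ⟨n, c, hc⟩ := IsPurelyInseparable.pow_mem k q a
      refine ⟨n, c • b ^ q ^ n, ?_⟩
      have h1 : (a ⊗ₜ[k] b) ^ q ^ n = (1 : K) ⊗ₜ[k] (c • b ^ q ^ n) := by
        rw [Algebra.TensorProduct.tmul_pow, ← hc, Algebra.algebraMap_eq_smul_one,
          TensorProduct.smul_tmul]
      rw [h1]
      simp [hfdef, Algebra.TensorProduct.includeRight_apply]
    | add x y hx hy => exact RadHom.add_pow_mem hQ hx hy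
  have hrad : RadHom q f := ⟨hinj, hQ, hpow⟩
  exact ⟨hrad.strongSRing_iff,
    ⟨fun h => catenarian_of_orderIso hrad.specIso h,
     fun h => catenarian_of_orderIso hrad.specIso.symm h⟩⟩
end
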